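/- arXiv:1706.06738 — 3 statements merged into one kernel-verified Lean document; each statement's English description precedes it below -/
import Mathlib

section
/- Fix an integer t ≥ 1 and a t-decomposable partition λ. Then any two t-rim hook tableaux of λ have the same sign; that is, the product ∏_j (−1)^{ht(ν_j) − 1} over the t-rim hooks ν_j removed in the chain is independent of the choice of t-rim hook tableau of λ. -/
open scoped BigOperators

/-- Two cells of `ℕ × ℕ` are adjacent if they differ by one in exactly one coordinate. -/
def CellAdj (a b : ℕ × ℕ) : Prop :=
  (a.1 = b.1 ∧ (a.2 = b.2 + 1 ∨ b.2 = a.2 + 1)) ∨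
  (a.2 = b.2 ∧ (a.1 = b.1 + 1 ∨ b.1 = a.1 + 1))

/-- A finite set of cells is connected if any two of its cells are joined by a path of
adjacent cells inside the set. -/
def CellsConnected (s : Finset (ℕ × ℕ)) : Prop :=
  ∀ x ∈ s, ∀ y ∈ s, Relation.ReflTransGen (fun a b => a ∈ s ∧ b ∈ s ∧ CellAdj a b) x y

/-- `RemoveHook t μ ν` : `ν` is obtained from `μ` by removing a `t`-rim hook, i.e. a connected
set of `t` boundary cells of the Young diagram of `μ` whose removal leaves a Young diagram. -/
def RemoveHook (t : ℕ) (μ ν : YoungDiagram) : Prop :=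
  ν.cells ⊆ μ.cells ∧ (μ.cells \ ν.cells).card = t ∧
  (∀ c ∈ μ.cells \ ν.cells, (c.1 + 1, c.2 + 1) ∉ μ) ∧
  CellsConnected (μ.cells \ ν.cells)

/-- A partition is a `t`-core if it admits no `t`-rim hook. -/
def IsTCore (t : ℕ) (μ : YoungDiagram) : Prop := ¬ ∃ ν, RemoveHook t μ ν

/-- `κ` is the `t`-core of `μ`: it is reachable from `μ` by removing `t`-rim hooks and admits
no further `t`-rim hook. -/
def IsTCoreOf (t : ℕ) (μ κ : YoungDiagram) : Prop :=
  Relation.ReflTransGen (RemoveHook t) μ κ ∧ IsTCore t κ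

/-- A partition is `t`-decomposable if it can be reduced to the empty partition by successive
removals of `t`-rim hooks. -/
def TDecomposable (t : ℕ) (μ : YoungDiagram) : Prop :=
  Relation.ReflTransGen (RemoveHook t) μ ⊥

/-- The hook length of the cell `c` of `μ`. -/
def hookLen (μ : YoungDiagram) (c : ℕ × ℕ) : ℕ :=
  μ.rowLen c.1 + μ.colLen c.2 - c.1 - c.2 - 1

/-- The β-set of `μ` with `l` elements: `{μ_i − i + l : 1 ≤ i ≤ l}`. -/
def betaSet (μ : YoungDiagram) (l : ℕ) : Finset ℕ :=
  (Finset.range l).image (fun i => μ.rowLen i + l - (i + 1))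

/-- The set `Q_r` of the context: the elements of the β-set `B_{t·l}(μ)` congruent to `r`
mod `t` are `{t·b + r : b ∈ Q_r}`. -/
def quotientSet (t l : ℕ) (μ : YoungDiagram) (r : ℕ) : Finset ℕ :=
  ((betaSet μ (t * l)).filter (fun x => x % t = r)).image (fun x => x / t)

/-- `Q` is the `r`-th `t`-quotient of `μ`: the partition whose β-set with `|Q_r|` elements
is `Q_r` (this is independent of the choice of `l`). -/
def IsQuotient (t : ℕ) (μ : YoungDiagram) (r : ℕ) (Q : YoungDiagram) : Prop :=
  ∃ l, μ.colLen 0 ≤ t * l ∧ betaSet Q (quotientSet t l μ r).card = quotientSet t l μ r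

/-- `RemoveCell μ ν` : `ν` is obtained from `μ` by removing a single cell. -/
def RemoveCell (μ ν : YoungDiagram) : Prop :=
  ν.cells ⊆ μ.cells ∧ μ.card = ν.card + 1

/-- A chain of partitions from `top` down to `bot`, each step removing a `t`-rim hook,
encoded as a list. -/
def IsHookChain (t : ℕ) (top bot : YoungDiagram) (L : List YoungDiagram) : Prop :=
  L.head? = some top ∧ L.getLast? = some bot ∧ L.Chain' (RemoveHook t)

/-- The number of `t`-rim hook tableaux of the skew shape `top ∖ bot`. -/
noncomputable def numRimHookTableaux (t : ℕ) (top bot : YoungDiagram) : ℕ :=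
  Set.ncard {L : List YoungDiagram | IsHookChain t top bot L}

/-- The number of standard Young tableaux of the skew shape `top ∖ bot`. -/
noncomputable def dimSkew (top bot : YoungDiagram) : ℕ :=
  Set.ncard {L : List YoungDiagram | L.head? = some top ∧ L.getLast? = some bot ∧
    L.Chain' RemoveCell}

/-- The number of standard Young tableaux of shape `μ`. -/
noncomputable def dimSYT (μ : YoungDiagram) : ℕ := dimSkew μ ⊥

/-- The height of a set of cells: the number of rows it meets. -/
def cellsHeight (s : Finset (ℕ × ℕ)) : ℕ := (s.image Prod.fst).card

/-- The sign of a chain of rim-hook removals: the product of `(−1)^{ht − 1}` over the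
removed hooks. -/
def hookSign (L : List YoungDiagram) : ℤ :=
  ((L.zip L.tail).map (fun p => (-1 : ℤ) ^ (cellsHeight (p.1.cells \ p.2.cells) - 1))).prod



namespace RHTaux

/-- Inversion count of a β-set relative to residues mod `t`. -/
def inv (t : ℕ) (B : Finset ℕ) : ℕ :=
  ∑ a ∈ B, (B.filter fun b => a < b ∧ b % t < a % t).card

lemma inv_insert {t : ℕ} {C : Finset ℕ} {y : ℕ} (hy : y ∉ C) :
    inv t (insert y C) = inv t C
      + (C.filter fun b => y < b ∧ b % t < y % t).card
      + (C.filter fun a => a < y ∧ y % t < a % t).card := by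
  unfold inv
  rw [Finset.sum_insert hy]
  have h1 : ((insert y C).filter fun b => y < b ∧ b % t < y % t).card
      = (C.filter fun b => y < b ∧ b % t < y % t).card := by
    rw [Finset.filter_insert, if_neg (by simp)]
  have h2 : ∀ a ∈ C, ((insert y C).filter fun b => a < b ∧ b % t < a % t).card
      = (C.filter fun b => a < b ∧ b % t < a % t).card
        + (if a < y ∧ y % t < a % t then 1 else 0) := by
    intro a _
    rw [Finset.filter_insert]
    split_ifs with h
    · rw [Finset.card_insert_of_notMem (fun hc => hy (Finset.mem_of_mem_filter _ hc))]
    · omega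
  rw [h1, Finset.sum_congr rfl h2, Finset.sum_add_distrib, ← Finset.card_filter]
  ring

lemma inv_move {t : ℕ} {C : Finset ℕ} {x : ℕ} (hx : x ∉ C) (hxt : t ≤ x) (hx' : x - t ∉ C) :
    ((-1 : ℤ) ^ inv t (insert x C)) * (-1) ^ (C.filter fun b => x - t < b ∧ b < x).card
      = (-1) ^ inv t (insert (x - t) C) := by
  have hmod : (x - t) % t = x % t := by
    conv_rhs => rw [← Nat.sub_add_cancel hxt]
    rw [Nat.add_mod_right]
  set ρ := x % t with hρ
  -- split the three filters
  have hC1 : (C.filter fun b => x - t < b ∧ b % t < ρ)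
      = (C.filter fun b => x < b ∧ b % t < ρ) ∪ (C.filter fun b => (x - t < b ∧ b < x) ∧ b % t < ρ) := by
    rw [← Finset.filter_or]
    apply Finset.filter_congr
    intro b hb
    constructor
    · rintro ⟨h1, h2⟩
      rcases lt_trichotomy b x with h | h | h
      · exact Or.inr ⟨⟨h1, h⟩, h2⟩
      · exfalso; subst h; omega
      · exact Or.inl ⟨h, h2⟩
    · rintro (⟨h1, h2⟩ | ⟨⟨h1, h1'⟩, h2⟩) <;> exact ⟨by omega, h2⟩
  have hC2 : (C.filter fun a => a < x ∧ ρ < a % t)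
      = (C.filter fun a => a < x - t ∧ ρ < a % t) ∪ (C.filter fun a => (x - t < a ∧ a < x) ∧ ρ < a % t) := by
    rw [← Finset.filter_or]
    apply Finset.filter_congr
    intro a ha
    constructor
    · rintro ⟨h1, h2⟩
      rcases lt_trichotomy a (x - t) with h | h | h
      · exact Or.inl ⟨h, h2⟩
      · exfalso; subst h; rw [hmod] at h2; omega
      · exact Or.inr ⟨⟨h, h1⟩, h2⟩
    · rintro (⟨h1, h2⟩ | ⟨⟨h1, h1'⟩, h2⟩) <;> exact ⟨by omega, h2⟩
  have hmid : (C.filter fun b => x - t < b ∧ b < x)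
      = (C.filter fun b => (x - t < b ∧ b < x) ∧ b % t < ρ)
        ∪ (C.filter fun b => (x - t < b ∧ b < x) ∧ ρ < b % t) := by
    rw [← Finset.filter_or]
    apply Finset.filter_congr
    intro b hb
    constructor
    · rintro ⟨h1, h2⟩
      rcases lt_trichotomy (b % t) ρ with h | h | h
      · exact Or.inl ⟨⟨h1, h2⟩, h⟩
      · exfalso
        have ht0 : 0 < t := by omega
        have hbx : b % t = x % t := h.trans hρ ▸ rfl
        have hdvd : t ∣ x - b := (Nat.modEq_iff_dvd' (le_of_lt h2)).mp (h.trans hρ)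
        have : t ≤ x - b := Nat.le_of_dvd (by omega) hdvd
        omega
      · exact Or.inr ⟨⟨h1, h2⟩, h⟩
    · rintro (⟨h1, _⟩ | ⟨h1, _⟩) <;> exact h1
  have d1 : Disjoint (C.filter fun b => x < b ∧ b % t < ρ)
      (C.filter fun b => (x - t < b ∧ b < x) ∧ b % t < ρ) := by
    rw [Finset.disjoint_left]
    intro b hb hb'
    simp only [Finset.mem_filter] at hb hb'
    omega
  have d2 : Disjoint (C.filter fun a => a < x - t ∧ ρ < a % t)
      (C.filter fun a => (x - t < a ∧ a < x) ∧ ρ < a % t) := by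
    rw [Finset.disjoint_left]
    intro b hb hb'
    simp only [Finset.mem_filter] at hb hb'
    omega
  have d3 : Disjoint (C.filter fun b => (x - t < b ∧ b < x) ∧ b % t < ρ)
      (C.filter fun b => (x - t < b ∧ b < x) ∧ ρ < b % t) := by
    rw [Finset.disjoint_left]
    intro b hb hb'
    simp only [Finset.mem_filter] at hb hb'
    omega
  have e1 := inv_insert (t := t) (C := C) hx
  simp only [← hρ] at e1
  have e2 := inv_insert (t := t) (C := C) hx'
  rw [hmod] at e2
  rw [hC1, Finset.card_union_of_disjoint d1] at e2
  rw [hC2, Finset.card_union_of_disjoint d2] at e1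
  have em : (C.filter fun b => x - t < b ∧ b < x).card
      = (C.filter fun b => (x - t < b ∧ b < x) ∧ b % t < ρ).card
        + (C.filter fun b => (x - t < b ∧ b < x) ∧ ρ < b % t).card := by
    rw [hmid, Finset.card_union_of_disjoint d3]
  have key : inv t (insert x C) + (C.filter fun b => x - t < b ∧ b < x).card
      = inv t (insert (x - t) C)
        + 2 * (C.filter fun b => (x - t < b ∧ b < x) ∧ ρ < b % t).card := by
    omega
  calc ((-1 : ℤ) ^ inv t (insert x C)) * (-1) ^ (C.filter fun b => x - t < b ∧ b < x).card
      = (-1) ^ (inv t (insert x C) + (C.filter fun b => x - t < b ∧ b < x).card) := by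
        rw [pow_add]
    _ = (-1) ^ (inv t (insert (x - t) C)
          + 2 * (C.filter fun b => (x - t < b ∧ b < x) ∧ ρ < b % t).card) := by rw [key]
    _ = (-1) ^ inv t (insert (x - t) C) := by
        rw [pow_add, pow_mul, neg_one_sq, one_pow, mul_one]

lemma exists_crossing {S : Finset (ℕ × ℕ)} (hconn : CellsConnected S) {r : ℕ}
    {a b : ℕ × ℕ} (ha : a ∈ S) (hb : b ∈ S) (har : a.1 ≤ r) (hbr : r < b.1) :
    ∃ c, (r, c) ∈ S ∧ (r + 1, c) ∈ S := by
  have hpath := hconn a ha b hb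
  clear ha
  induction hpath using Relation.ReflTransGen.head_induction_on with
  | refl => omega
  | head hstep _ ih =>
    rename_i x y _
    obtain ⟨hxS, hyS, hadj⟩ := hstep
    by_cases hy : y.1 ≤ r
    · exact ih hy
    · push_neg at hy
      rcases hadj with ⟨h1, _⟩ | ⟨h1, h2 | h2⟩
      · omega
      · omega
      · have hx1 : x.1 = r := by omega
        refine ⟨x.2, ?_, ?_⟩
        · have : (r, x.2) = x := by rw [← hx1]
          rwa [this]
        · have : (r + 1, x.2) = y := by
            apply Prod.ext <;> simp <;> omega
          rwa [this]

lemma rowLen_le_of_subset {μ ν : YoungDiagram} (h : ν.cells ⊆ μ.cells) (r : ℕ) :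
    ν.rowLen r ≤ μ.rowLen r := by
  by_contra hc
  push_neg at hc
  have h1 : (r, μ.rowLen r) ∈ ν := YoungDiagram.mem_iff_lt_rowLen.mpr hc
  have h2 : (r, μ.rowLen r) ∈ μ := h h1
  rw [YoungDiagram.mem_iff_lt_rowLen] at h2
  omega

lemma colLen_le_of_subset {μ ν : YoungDiagram} (h : ν.cells ⊆ μ.cells) :
    ν.colLen 0 ≤ μ.colLen 0 := by
  by_contra hc
  push_neg at hc
  have h1 : (μ.colLen 0, 0) ∈ ν := YoungDiagram.mem_iff_lt_colLen.mpr hc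
  have h2 : (μ.colLen 0, 0) ∈ μ := h h1
  rw [YoungDiagram.mem_iff_lt_colLen] at h2
  omega

/-- telescoping sum for the hook rows -/
lemma tele (f g : ℕ → ℕ) : ∀ d i, (∀ r, i ≤ r → r ≤ i + d → g r ≤ f r) →
    (∀ r, i ≤ r → r < i + d → g r + 1 = f (r + 1)) →
    f i + d = (∑ r ∈ Finset.Icc i (i + d), (f r - g r)) + g (i + d) := by
  intro d
  induction d with
  | zero =>
    intro i hle _
    simp only [Nat.add_zero, Finset.Icc_self, Finset.sum_singleton]
    have := hle i le_rfl le_rfl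
    omega
  | succ d ih =>
    intro i hle hrel
    have hsplit : Finset.Icc i (i + (d + 1)) = insert i (Finset.Icc (i + 1) (i + (d + 1))) := by
      ext r
      simp only [Finset.mem_Icc, Finset.mem_insert]
      omega
    rw [hsplit, Finset.sum_insert (by simp)]
    have ih' := ih (i + 1) (fun r h1 h2 => hle r (by omega) (by omega))
      (fun r h1 h2 => hrel r (by omega) (by omega))
    have heq : i + 1 + d = i + (d + 1) := by omega
    rw [heq] at ih'
    have h1 := hle i le_rfl (by omega)
    have h2 := hrel i le_rfl (by omega)
    omega

/-- The row structure of a rim hook. -/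
lemma hook_structure {t : ℕ} (ht : 1 ≤ t) {μ ν : YoungDiagram} (h : RemoveHook t μ ν) :
    ∃ i j : ℕ, i ≤ j ∧
      (∀ r, r < i ∨ j < r → ν.rowLen r = μ.rowLen r) ∧
      (∀ r, i ≤ r → r < j → ν.rowLen r + 1 = μ.rowLen (r + 1)) ∧
      (∀ r, i ≤ r → r ≤ j → ν.rowLen r < μ.rowLen r) ∧
      cellsHeight (μ.cells \ ν.cells) = j - i + 1 ∧
      μ.rowLen i + j = t + ν.rowLen j + i := by
  obtain ⟨hsub, hcard, hrim, hconn⟩ := h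
  have hmemS : ∀ r q : ℕ, (r, q) ∈ μ.cells \ ν.cells ↔ ν.rowLen r ≤ q ∧ q < μ.rowLen r := by
    intro r q
    rw [Finset.mem_sdiff, YoungDiagram.mem_cells, YoungDiagram.mem_cells,
      YoungDiagram.mem_iff_lt_rowLen, YoungDiagram.mem_iff_lt_rowLen]
    omega
  obtain ⟨S, hS⟩ : ∃ S, μ.cells \ ν.cells = S := ⟨_, rfl⟩
  rw [hS] at hcard hrim hconn hmemS ⊢
  have hne : S.Nonempty := Finset.card_pos.mp (by omega)
  have hRne : (S.image Prod.fst).Nonempty := hne.image _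
  obtain ⟨i, hi⟩ : ∃ i, (S.image Prod.fst).min' hRne = i := ⟨_, rfl⟩
  obtain ⟨j, hj⟩ : ∃ j, (S.image Prod.fst).max' hRne = j := ⟨_, rfl⟩
  have hij : i ≤ j := by
    rw [← hi, ← hj]
    exact Finset.min'_le _ _ (Finset.max'_mem _ _)
  have hrowi : ∃ c, (i, c) ∈ S := by
    obtain ⟨p, hp, hp2⟩ := Finset.mem_image.mp (hi ▸ (S.image Prod.fst).min'_mem hRne)
    exact ⟨p.2, by rw [← hp2, Prod.mk.eta]; exact hp⟩
  have hrowj : ∃ c, (j, c) ∈ S := by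
    obtain ⟨p, hp, hp2⟩ := Finset.mem_image.mp (hj ▸ (S.image Prod.fst).max'_mem hRne)
    exact ⟨p.2, by rw [← hp2, Prod.mk.eta]; exact hp⟩
  have hbound : ∀ c ∈ S, i ≤ c.1 ∧ c.1 ≤ j := by
    intro c hc
    have hcR : c.1 ∈ S.image Prod.fst := Finset.mem_image_of_mem _ hc
    exact ⟨hi ▸ Finset.min'_le _ _ hcR, hj ▸ Finset.le_max' _ _ hcR⟩
  have hcross : ∀ r, i ≤ r → r < j → ∃ c, (r, c) ∈ S ∧ (r + 1, c) ∈ S := by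
    intro r h1 h2
    obtain ⟨ci, hci⟩ := hrowi
    obtain ⟨cj, hcj⟩ := hrowj
    exact exists_crossing hconn hci hcj (by simpa using h1) (by simpa using h2)
  have hrel : ∀ r, i ≤ r → r < j → ν.rowLen r + 1 = μ.rowLen (r + 1) := by
    intro r h1 h2
    obtain ⟨c, hc1, hc2⟩ := hcross r h1 h2
    rw [hmemS] at hc1 hc2
    have hlt : ν.rowLen r < μ.rowLen (r + 1) := by omega
    have hmono : μ.rowLen (r + 1) ≤ μ.rowLen r := μ.rowLen_anti r (r + 1) (by omega)
    have hcell : (r, ν.rowLen r) ∈ S := (hmemS _ _).mpr ⟨le_rfl, by omega⟩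
    have hout : (r + 1, ν.rowLen r + 1) ∉ μ := hrim _ hcell
    rw [YoungDiagram.mem_iff_lt_rowLen] at hout
    omega
  have hrow : ∀ r, i ≤ r → r ≤ j → ν.rowLen r < μ.rowLen r := by
    intro r h1 h2
    rcases eq_or_lt_of_le h2 with rfl | h2'
    · obtain ⟨c, hc⟩ := hrowj
      rw [hmemS] at hc
      omega
    · obtain ⟨c, hc1, _⟩ := hcross r h1 h2'
      rw [hmemS] at hc1
      omega
  have hout : ∀ r, r < i ∨ j < r → ν.rowLen r = μ.rowLen r := by
    intro r hr
    have hle := rowLen_le_of_subset hsub r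
    rcases eq_or_lt_of_le hle with he | hlt
    · exact he
    · exfalso
      have hmem : (r, ν.rowLen r) ∈ S := (hmemS _ _).mpr ⟨le_rfl, hlt⟩
      have := hbound _ hmem
      simp only [Prod.fst] at this
      omega
  have hRicc : S.image Prod.fst = Finset.Icc i j := by
    apply Finset.ext
    intro r
    rw [Finset.mem_Icc]
    constructor
    · intro hr
      obtain ⟨p, hp, hp2⟩ := Finset.mem_image.mp hr
      have := hbound p hp
      omega
    · rintro ⟨h1, h2⟩
      have := hrow r h1 h2
      exact Finset.mem_image.mpr ⟨(r, ν.rowLen r), (hmemS _ _).mpr ⟨le_rfl, this⟩, rfl⟩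
  have hheight : cellsHeight S = j - i + 1 := by
    rw [cellsHeight, hRicc, Nat.card_Icc]
    omega
  have hfiber : ∀ r ∈ Finset.Icc i j, (S.filter fun c => c.1 = r).card
      = μ.rowLen r - ν.rowLen r := by
    intro r _
    have hmap : S.filter (fun c => c.1 = r)
        = (Finset.Ico (ν.rowLen r) (μ.rowLen r)).map
            ⟨fun q => (r, q), fun a b hab => (Prod.ext_iff.mp hab).2⟩ := by
      apply Finset.ext
      rintro ⟨a, b⟩
      simp only [Finset.mem_filter, Finset.mem_map, Finset.mem_Ico, Function.Embedding.coeFn_mk,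
        Prod.mk.injEq, hmemS]
      constructor
      · rintro ⟨⟨h1, h2⟩, h3⟩
        subst h3
        exact ⟨b, ⟨h1, h2⟩, rfl⟩
      · rintro ⟨q, ⟨h1, h2⟩, h3⟩
        have h3' : (r, q) = (a, b) := h3
        obtain ⟨rfl, rfl⟩ := Prod.mk.inj h3'
        exact ⟨⟨h1, h2⟩, rfl⟩
    rw [hmap, Finset.card_map, Nat.card_Ico]
  have hsum : t = ∑ r ∈ Finset.Icc i j, (μ.rowLen r - ν.rowLen r) := by
    rw [← hcard, Finset.card_eq_sum_card_fiberwise (f := Prod.fst) (t := Finset.Icc i j)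
      (fun c hc => Finset.mem_Icc.mpr (hbound c hc))]
    exact Finset.sum_congr rfl hfiber
  have htel := tele (μ.rowLen) (ν.rowLen) (j - i) i
    (fun r h1 h2 => le_of_lt (hrow r h1 (by omega)))
    (fun r h1 h2 => hrel r h1 (by omega))
  have hiji : i + (j - i) = j := by omega
  rw [hiji] at htel
  exact ⟨i, j, hij, hout, hrel, hrow, hheight, by omega⟩

lemma beta_step {t n : ℕ} (ht : 1 ≤ t) {μ ν : YoungDiagram} (h : RemoveHook t μ ν)
    (hn : μ.colLen 0 ≤ n) :
    ∃ x C, x ∉ C ∧ t ≤ x ∧ x - t ∉ C ∧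
      betaSet μ n = insert x C ∧ betaSet ν n = insert (x - t) C ∧
      (C.filter fun b => x - t < b ∧ b < x).card + 1
        = cellsHeight (μ.cells \ ν.cells) := by
  obtain ⟨i, j, hij, hout, hrel, hrow, hheight, heq⟩ := hook_structure ht h
  have hjn : j < n := by
    have h1 : ν.rowLen j < μ.rowLen j := hrow j hij le_rfl
    have h2 : (j, 0) ∈ μ := YoungDiagram.mem_iff_lt_rowLen.mpr (by omega)
    rw [YoungDiagram.mem_iff_lt_colLen] at h2
    omega
  have hin : i < n := by omega
  set bμ : ℕ → ℕ := fun r => μ.rowLen r + n - (r + 1) with hbμ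
  set bν : ℕ → ℕ := fun r => ν.rowLen r + n - (r + 1) with hbν
  have hμanti : ∀ r s, r < s → s < n → bμ s < bμ r := by
    intro r s h1 h2
    have := μ.rowLen_anti r s (le_of_lt h1)
    simp only [hbμ]
    omega
  have hνanti : ∀ r s, r < s → s < n → bν s < bν r := by
    intro r s h1 h2
    have := ν.rowLen_anti r s (le_of_lt h1)
    simp only [hbν]
    omega
  set x := bμ i with hx
  set C := ((Finset.range n).erase i).image bμ with hC
  have hxval : x = μ.rowLen i + n - (i + 1) := rfl
  have hxt : x - t = ν.rowLen j + n - (j + 1) := by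
    have hr := hrow j hij le_rfl
    omega
  have hmemC : ∀ y, y ∈ C ↔ ∃ r, r ≠ i ∧ r < n ∧ bμ r = y := by
    intro y
    simp only [hC, Finset.mem_image, Finset.mem_erase, Finset.mem_range]
    constructor
    · rintro ⟨r, ⟨h1, h2⟩, h3⟩; exact ⟨r, h1, h2, h3⟩
    · rintro ⟨r, h1, h2, h3⟩; exact ⟨r, ⟨h1, h2⟩, h3⟩
  have hxC : x ∉ C := by
    rw [hmemC]
    rintro ⟨r, h1, h2, h3⟩
    rcases lt_or_gt_of_ne h1 with hlt | hgt
    · have := hμanti r i hlt hin; omega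
    · have := hμanti i r hgt h2; omega
  have htx : t ≤ x := by omega
  -- bμ on (j, n) agrees with bν
  have hagree : ∀ r, r < i ∨ j < r → bμ r = bν r := by
    intro r hr
    simp only [hbμ, hbν, hout r hr]
  have hxtC : x - t ∉ C := by
    rw [hmemC]
    rintro ⟨r, h1, h2, h3⟩
    rcases le_or_gt r j with hle | hgt
    · have hbj : x - t < bμ j := by
        have := hrow j hij le_rfl
        simp only [hbμ]
        omega
      rcases eq_or_lt_of_le hle with rfl | hlt
      · omega
      · have := hμanti r j hlt hjn; omega
    · have h4 : bμ r = bν r := hagree r (Or.inr hgt)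
      have h5 : bν r < bν j := hνanti j r hgt h2
      have hbjν : bν j = x - t := by simp only [hbν]; omega
      omega
  have hbetaμ : betaSet μ n = insert x C := by
    rw [betaSet, hC, hx, ← Finset.image_insert, Finset.insert_erase (Finset.mem_range.mpr hin)]
  have hbetaν : betaSet ν n = insert (x - t) C := by
    apply Finset.ext
    intro y
    rw [betaSet, Finset.mem_image, Finset.mem_insert, hmemC]
    constructor
    · rintro ⟨r, hr, hry⟩
      rw [Finset.mem_range] at hr
      have hry' : bν r = y := hry
      rcases lt_or_ge r i with h1 | h1
      · exact Or.inr ⟨r, by omega, hr, by rw [hagree r (Or.inl h1)]; exact hry'⟩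
      · rcases lt_or_ge r j with h2 | h2
        · refine Or.inr ⟨r + 1, by omega, by omega, ?_⟩
          have := hrel r h1 h2
          simp only [hbμ, hbν] at hry' ⊢
          omega
        · rcases eq_or_lt_of_le h2 with rfl | h3
          · left
            simp only [hbν] at hry'
            omega
          · exact Or.inr ⟨r, by omega, hr, by rw [hagree r (Or.inr h3)]; exact hry'⟩
    · rintro (rfl | ⟨r, h1, h2, h3⟩)
      · refine ⟨j, Finset.mem_range.mpr hjn, ?_⟩
        show bν j = x - t
        simp only [hbν]
        omega
      · rcases lt_or_ge r i with h4 | h4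
        · refine ⟨r, Finset.mem_range.mpr h2, ?_⟩
          show bν r = y
          rw [← hagree r (Or.inl h4)]; exact h3
        · rcases le_or_gt r j with h5 | h5
          · have h6 : i < r := by omega
            refine ⟨r - 1, Finset.mem_range.mpr (by omega), ?_⟩
            show bν (r - 1) = y
            have h7 := hrel (r - 1) (by omega) (by omega)
            have h8 : r - 1 + 1 = r := by omega
            rw [h8] at h7
            simp only [hbμ, hbν] at h3 ⊢
            omega
          · refine ⟨r, Finset.mem_range.mpr h2, ?_⟩
            show bν r = y
            rw [← hagree r (Or.inr h5)]; exact h3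
  have hfilter : C.filter (fun b => x - t < b ∧ b < x) = (Finset.Icc (i + 1) j).image bμ := by
    apply Finset.ext
    intro y
    rw [Finset.mem_filter, hmemC, Finset.mem_image]
    constructor
    · rintro ⟨⟨r, h1, h2, h3⟩, h4, h5⟩
      refine ⟨r, Finset.mem_Icc.mpr ⟨?_, ?_⟩, h3⟩
      · rcases lt_or_ge r i with hlt | hle
        · exfalso; have := hμanti r i hlt hin; omega
        · omega
      · by_contra hc
        push_neg at hc
        have h6 : bμ r = bν r := hagree r (Or.inr hc)
        have h7 : bν r < bν j := hνanti j r hc h2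
        have hbjν : bν j = x - t := by simp only [hbν]; omega
        omega
    · rintro ⟨r, hr, h3⟩
      rw [Finset.mem_Icc] at hr
      have h2 : r < n := by omega
      refine ⟨⟨r, by omega, h2, h3⟩, ?_, ?_⟩
      · have hbj : x - t < bμ j := by
          have := hrow j hij le_rfl
          simp only [hbμ]
          omega
        rcases eq_or_lt_of_le hr.2 with rfl | hlt
        · omega
        · have := hμanti r j hlt hjn; omega
      · have := hμanti i r (by omega) h2
        omega
  refine ⟨x, C, hxC, htx, hxtC, hbetaμ, hbetaν, ?_⟩
  rw [hfilter, hheight, Finset.card_image_of_injOn, Nat.card_Icc]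
  · omega
  · intro a ha b hb hab
    simp only [Finset.coe_Icc, Set.mem_Icc] at ha hb
    by_contra hne
    rcases lt_or_gt_of_ne hne with hlt | hgt
    · have := hμanti a b hlt (by omega); omega
    · have := hμanti b a hgt (by omega); omega


lemma sign_step {t n : ℕ} (ht : 1 ≤ t) {μ ν : YoungDiagram} (h : RemoveHook t μ ν)
    (hn : μ.colLen 0 ≤ n) :
    ((-1 : ℤ) ^ inv t (betaSet μ n)) * (-1) ^ (cellsHeight (μ.cells \ ν.cells) - 1)
      = (-1) ^ inv t (betaSet ν n) := by
  obtain ⟨x, C, h1, h2, h3, h4, h5, h6⟩ := beta_step ht h hn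
  rw [h4, h5, ← inv_move h1 h2 h3]
  congr 2
  omega

lemma hookSign_cons (a b : YoungDiagram) (rest : List YoungDiagram) :
    hookSign (a :: b :: rest)
      = (-1 : ℤ) ^ (cellsHeight (a.cells \ b.cells) - 1) * hookSign (b :: rest) := by
  simp [hookSign]

lemma chain_sign {t : ℕ} (n : ℕ) (ht : 1 ≤ t) :
    ∀ (L : List YoungDiagram) (top : YoungDiagram), top.colLen 0 ≤ n →
      L.head? = some top → L.getLast? = some ⊥ → L.Chain' (RemoveHook t) →
      hookSign L * (-1 : ℤ) ^ inv t (betaSet (⊥ : YoungDiagram) n)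
        = (-1) ^ inv t (betaSet top n) := by
  intro L
  induction L with
  | nil => intro top _ hh _ _; simp at hh
  | cons a rest ih =>
    intro top hcol hh hl hc
    rw [List.head?_cons, Option.some_inj] at hh
    subst hh
    cases rest with
    | nil =>
      have hb : a = ⊥ := by simpa using hl
      subst hb
      simp [hookSign]
    | cons b rest' =>
      have hstep : RemoveHook t a b := (List.isChain_cons_cons.mp hc).1
      have hc' : List.Chain' (RemoveHook t) (b :: rest') := (List.isChain_cons_cons.mp hc).2
      have hl' : (b :: rest').getLast? = some ⊥ := by
        rw [← hl, List.getLast?_cons_cons]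
      have hcolb : b.colLen 0 ≤ n := le_trans (colLen_le_of_subset hstep.1) hcol
      have ihb := ih b hcolb rfl hl' hc'
      have hss := sign_step (n := n) ht hstep hcol
      set m := cellsHeight (a.cells \ b.cells) - 1 with hm
      calc hookSign (a :: b :: rest') * (-1 : ℤ) ^ inv t (betaSet (⊥ : YoungDiagram) n)
          = (-1 : ℤ) ^ m * (hookSign (b :: rest') * (-1) ^ inv t (betaSet (⊥ : YoungDiagram) n)) := by
            rw [hookSign_cons]; ring
        _ = (-1 : ℤ) ^ m * (-1) ^ inv t (betaSet b n) := by rw [ihb]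
        _ = (-1 : ℤ) ^ m * ((-1) ^ inv t (betaSet a n) * (-1) ^ m) := by rw [hss]
        _ = (-1 : ℤ) ^ inv t (betaSet a n) * ((-1) ^ (m + m)) := by rw [pow_add]; ring
        _ = (-1 : ℤ) ^ inv t (betaSet a n) := by
            rw [Even.neg_one_pow ⟨m, rfl⟩, mul_one]

end RHTaux

/-- **All `t`-rim hook tableaux of a `t`-decomposable partition have the same sign:** the
product of `(−1)^{ht(ν) − 1}` over the removed hooks is independent of the tableau. -/
theorem rim_hook_tableau_sign_invariant (t : ℕ) (ht : 1 ≤ t) (lam : YoungDiagram)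
    (hdec : TDecomposable t lam) (L₁ L₂ : List YoungDiagram)
    (h₁ : IsHookChain t lam ⊥ L₁) (h₂ : IsHookChain t lam ⊥ L₂) :
    hookSign L₁ = hookSign L₂ := by
  have e1 := RHTaux.chain_sign (lam.colLen 0) ht L₁ lam le_rfl h₁.1 h₁.2.1 h₁.2.2
  have e2 := RHTaux.chain_sign (lam.colLen 0) ht L₂ lam le_rfl h₂.1 h₂.2.1 h₂.2.2
  have hX : ((-1 : ℤ) ^ RHTaux.inv t (betaSet (⊥ : YoungDiagram) (lam.colLen 0))) ≠ 0 :=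
    pow_ne_zero _ (by norm_num)
  exact mul_right_cancel₀ hX (e1.trans e2.symm)
end

section
/- Fix an integer N ≥ 3. Define rational numbers m_N(k,l) for integers k,l ≥ 0 by m_N(k,l) = 𝔟(k)·𝔠(l)·v(k,l), with 𝔟, 𝔠, v as in the context. Let λ be a partition, let n be a multiple of N with n at least the number of parts of λ, let b_1 > b_2 > ⋯ > b_n be the elements of the β-set B_n(λ), and let M(λ) be the n × n matrix with (i,j)-entry m_N(b_i, b_j). If det M(λ) ≠ 0, then each residue class modulo N contains exactly n/N of the elements b_1, …, b_n; equivalently, λ is N-decomposable. -/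
open scoped BigOperators

/-- `𝔟(k)`: the product of all `r ∈ {1,…,k}` with `r ≡ −1 (mod N)` divided by the product of
all `r ∈ {1,…,k}` with `r ≡ 0 (mod N)`. -/
noncomputable def bFrak (N k : ℕ) : ℚ :=
  (∏ r ∈ (Finset.Icc 1 k).filter (fun r => r % N = N - 1), (r : ℚ)) /
    (∏ r ∈ (Finset.Icc 1 k).filter (fun r => r % N = 0), (r : ℚ))

/-- `𝔠(l)`: the product of all `r ∈ {1,…,l}` with `r ≡ 1 (mod N)` divided by the product of
all `r ∈ {1,…,l}` with `r ≡ 0 (mod N)`. -/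
noncomputable def cFrak (N l : ℕ) : ℚ :=
  (∏ r ∈ (Finset.Icc 1 l).filter (fun r => r % N = 1), (r : ℚ)) /
    (∏ r ∈ (Finset.Icc 1 l).filter (fun r => r % N = 0), (r : ℚ))

/-- `v(k,l)`: `1/(l − k)` if `k ≡ l + 1 (mod N)`; `1` if `k ≡ 0` and `k ≢ l + 1 (mod N)`;
`0` otherwise. -/
noncomputable def vEntry (N k l : ℕ) : ℚ :=
  if k % N = (l + 1) % N then ((l : ℚ) - (k : ℚ))⁻¹
  else if k % N = 0 then 1 else 0

/-- The matrix entry `m_N(k,l) = 𝔟(k)·𝔠(l)·v(k,l)`. -/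
noncomputable def mEntry (N k l : ℕ) : ℚ := bFrak N k * cFrak N l * vEntry N k l

section Aux

lemma pred_mod_iff {N a s : ℕ} (hN : 2 ≤ N) (ha : a < N) (hs : s < N) :
    (a + (N - 1)) % N = s ↔ a = (s + 1) % N := by
  have h1 : (a + (N - 1)) % N = if a = 0 then N - 1 else a - 1 := by
    split_ifs with h
    · subst h; simpa using Nat.mod_eq_of_lt (by omega : N - 1 < N)
    · have h3 : a + (N - 1) = (a - 1) + N := by omega
      rw [h3, Nat.add_mod_right, Nat.mod_eq_of_lt (by omega)]
  have h2 : (s + 1) % N = if s = N - 1 then 0 else s + 1 := by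
    split_ifs with h
    · rw [h, show N - 1 + 1 = N by omega, Nat.mod_self]
    · rw [Nat.mod_eq_of_lt (by omega)]
  rw [h1, h2]; split_ifs <;> omega

lemma succ_mod_eq_zero_iff {N l : ℕ} (hN : 0 < N) : (l + 1) % N = 0 ↔ l % N = N - 1 := by
  have hl := Nat.mod_lt l hN
  have h1 : (l + 1) % N = (l % N + 1) % N := by
    conv_lhs => rw [← Nat.mod_add_mod]
  constructor
  · intro h
    rw [h1] at h
    rcases Nat.lt_or_ge (l % N + 1) N with h2 | h2
    · rw [Nat.mod_eq_of_lt h2] at h; omega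
    · omega
  · intro h
    rw [h1, h, show N - 1 + 1 = N by omega, Nat.mod_self]

lemma counting_lemma {n N : ℕ} (hN : 2 ≤ N) (hn : N ∣ n) (g : Fin n → ℕ)
    (hg : ∀ i, g i < N) (σ : Equiv.Perm (Fin n)) (k0 : Fin n)
    (h : ∀ i, i ≠ k0 → g (σ i) = (g i + (N - 1)) % N) :
    ∀ r < N, (Finset.univ.filter (fun i : Fin n => g i = r)).card = n / N := by
  classical
  set c : ℕ → ℕ := fun r => (Finset.univ.filter (fun i : Fin n => g i = r)).card with hc
  set a : ℕ := g k0
  set t : ℕ := g (σ k0)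
  have hcdef : ∀ r, c r = ∑ i : Fin n, (if g i = r then (1:ℕ) else 0) := by
    intro r
    show (Finset.univ.filter (fun i : Fin n => g i = r)).card = _
    exact Finset.card_filter _ _
  have hsum : ∑ r ∈ Finset.range N, c r = n := by
    rw [← Finset.card_fin n]
    exact (Finset.card_eq_sum_card_fiberwise (fun i _ => Finset.mem_range.mpr (hg i))).symm
  have key : ∀ s < N, c s + (if a = (s + 1) % N then 1 else 0)
      = c ((s + 1) % N) + (if t = s then 1 else 0) := by
    intro s hs
    have e1 : c s = ∑ i : Fin n, (if g (σ i) = s then (1:ℕ) else 0) := by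
      rw [hcdef]
      exact (Equiv.sum_comp σ (fun j => if g j = s then (1:ℕ) else 0)).symm
    have e2 : ∑ i : Fin n, (if g (σ i) = s then (1:ℕ) else 0)
        = ∑ i ∈ Finset.univ.erase k0, (if g (σ i) = s then (1:ℕ) else 0)
          + (if t = s then 1 else 0) := by
      rw [Finset.sum_erase_add Finset.univ _ (Finset.mem_univ k0)]
    have e3 : ∀ i ∈ Finset.univ.erase k0,
        (if g (σ i) = s then (1:ℕ) else 0) = (if g i = (s+1) % N then 1 else 0) := by
      intro i hi
      have hik : i ≠ k0 := Finset.ne_of_mem_erase hi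
      rw [h i hik]
      congr 1
      simp only [eq_iff_iff]
      exact pred_mod_iff hN (hg i) hs
    rw [Finset.sum_congr rfl e3] at e2
    have e4 : ∑ i ∈ Finset.univ.erase k0, (if g i = (s+1) % N then (1:ℕ) else 0)
        + (if a = (s+1) % N then 1 else 0) = c ((s+1) % N) := by
      rw [hcdef]
      exact Finset.sum_erase_add Finset.univ _ (Finset.mem_univ k0)
    have := e1.trans e2
    omega
  have ha : a < N := hg k0
  have ht : t < N := hg (σ k0)
  have formula : ∀ s < N, (c s : ℤ) = (c 0 : ℤ)
      + (if 1 ≤ a ∧ a ≤ s then 1 else 0) - (if t < s then 1 else 0) := by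
    intro s
    induction s with
    | zero => intro _; split_ifs <;> omega
    | succ m ih =>
      intro hm
      have hmN : m < N := by omega
      have hkey := key m hmN
      have hmod : (m + 1) % N = m + 1 := Nat.mod_eq_of_lt hm
      rw [hmod] at hkey
      have ihm := ih (by omega)
      split_ifs at hkey ihm ⊢ <;> omega
  have hsum2 : (n : ℤ) = N * (c 0 : ℤ)
      + (if 1 ≤ a then (N : ℤ) - a else 0) - ((N : ℤ) - 1 - t) := by
    have hs1 : ∑ s ∈ Finset.range N, (c s : ℤ) = (n : ℤ) := by exact_mod_cast hsum
    rw [← hs1]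
    rw [Finset.sum_congr rfl (fun s hs => formula s (Finset.mem_range.mp hs))]
    rw [Finset.sum_sub_distrib, Finset.sum_add_distrib]
    simp only [Finset.sum_const, Finset.card_range, nsmul_eq_mul, mul_one]
    have i1 : ∑ s ∈ Finset.range N, (if 1 ≤ a ∧ a ≤ s then (1:ℤ) else 0)
        = (if 1 ≤ a then (N : ℤ) - a else 0) := by
      rw [← Finset.sum_filter]
      split_ifs with h1
      · have he : (Finset.range N).filter (fun s => 1 ≤ a ∧ a ≤ s) = Finset.Ico a N := by
          ext s; simp only [Finset.mem_filter, Finset.mem_range, Finset.mem_Ico]; omega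
        rw [he, Finset.sum_const, Nat.card_Ico, nsmul_eq_mul, mul_one]; omega
      · have he : (Finset.range N).filter (fun s => 1 ≤ a ∧ a ≤ s) = ∅ := by
          ext s; simp only [Finset.mem_filter, Finset.mem_range, Finset.notMem_empty, iff_false]; omega
        rw [he]; simp
    have i2 : ∑ s ∈ Finset.range N, (if t < s then (1:ℤ) else 0) = (N : ℤ) - 1 - t := by
      rw [← Finset.sum_filter]
      have he : (Finset.range N).filter (fun s => t < s) = Finset.Ico (t+1) N := by
        ext s; simp only [Finset.mem_filter, Finset.mem_range, Finset.mem_Ico]; omega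
      rw [he, Finset.sum_const, Nat.card_Ico, nsmul_eq_mul, mul_one]; omega
    rw [i1, i2]
  have hdvd : (N : ℤ) ∣ (n : ℤ) := Int.natCast_dvd_natCast.mpr hn
  have hNc : (N:ℤ) ∣ ((if 1 ≤ a then (N : ℤ) - a else 0) - ((N : ℤ) - 1 - t)) := by
    have he : ((if 1 ≤ a then (N : ℤ) - a else 0) - ((N : ℤ) - 1 - t))
        = (n : ℤ) - N * (c 0 : ℤ) := by omega
    rw [he]
    exact dvd_sub hdvd ⟨_, rfl⟩
  have hzero : (if 1 ≤ a then (N : ℤ) - a else 0) - ((N : ℤ) - 1 - t) = 0 := by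
    rcases hNc with ⟨q, hq⟩
    have hNb : (2:ℤ) ≤ (N:ℤ) := by exact_mod_cast hN
    have hab : (a:ℤ) < N := by exact_mod_cast ha
    have htb : (t:ℤ) < N := by exact_mod_cast ht
    have hq0 : q = 0 := by
      by_contra hq0
      rcases lt_or_gt_of_ne hq0 with hlt | hgt
      · have : (N:ℤ) * q ≤ -N := by
          have : q ≤ -1 := by omega
          nlinarith
        split_ifs at hq with h1
        · have : (1:ℤ) ≤ (a:ℤ) := by exact_mod_cast h1
          omega
        · omega
      · have : (N:ℤ) ≤ N * q := by
          have : 1 ≤ q := by omega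
          nlinarith
        split_ifs at hq with h1
        · have : (1:ℤ) ≤ (a:ℤ) := by exact_mod_cast h1
          have ht0 : (0:ℤ) ≤ (t:ℤ) := by positivity
          omega
        · have ht0 : (0:ℤ) ≤ (t:ℤ) := by positivity
          omega
    rw [hq0, mul_zero] at hq
    exact hq
  have hc0 : (N:ℤ) * (c 0 : ℤ) = n := by omega
  have hceq : ∀ s < N, c s = c 0 := by
    intro s hs
    have hf := formula s hs
    split_ifs at hzero with h1
    · have h2 : (1:ℤ) ≤ (a:ℤ) := by exact_mod_cast h1
      have hta : t = a - 1 := by omega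
      split_ifs at hf <;> omega
    · have ha0 : a = 0 := by omega
      have htv : t = N - 1 := by
        have : (t:ℤ) = (N:ℤ) - 1 := by omega
        omega
      split_ifs at hf <;> omega
  intro r hr
  have hNn : N * c 0 = n := by exact_mod_cast hc0
  have hdiv : n / N = c 0 := Nat.div_eq_of_eq_mul_left (by omega) (by rw [← hNn]; ring)
  rw [show (Finset.univ.filter (fun i : Fin n => g i = r)).card = c r from rfl, hceq r hr, hdiv]

lemma exists_perm_of_det_ne_zero {n : ℕ} (M : Matrix (Fin n) (Fin n) ℚ) (h : M.det ≠ 0) :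
    ∃ σ : Equiv.Perm (Fin n), ∀ i, M i (σ i) ≠ 0 := by
  by_contra hc
  push_neg at hc
  apply h
  rw [Matrix.det_apply]
  refine Finset.sum_eq_zero fun σ _ => ?_
  obtain ⟨i, hi⟩ := hc σ⁻¹
  have hz : M (σ (σ⁻¹ i)) (σ⁻¹ i) = 0 := by rwa [← Equiv.Perm.mul_apply, mul_inv_cancel, Equiv.Perm.one_apply]
  have hp : (∏ j : Fin n, M (σ j) j) = 0 :=
    Finset.prod_eq_zero (Finset.mem_univ (σ⁻¹ i)) hz
  rw [hp, smul_zero]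

lemma det_sub_rows {n : ℕ} (M : Matrix (Fin n) (Fin n) ℚ) (k0 : Fin n) (f : Fin n → ℚ)
    (S : Finset (Fin n)) (hk0 : k0 ∉ S) :
    (Matrix.of fun i j => if i ∈ S then M i j - f i * M k0 j else M i j).det = M.det := by
  classical
  induction S using Finset.induction_on with
  | empty =>
    have he : (Matrix.of fun i j => if i ∈ (∅ : Finset (Fin n)) then M i j - f i * M k0 j
        else M i j) = M := by
      ext i j; simp
    rw [he]
  | @insert a S ha ih =>
    have hk0S : k0 ∉ S := fun h => hk0 (Finset.mem_insert_of_mem h)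
    have hak0 : a ≠ k0 := fun h => hk0 (h ▸ Finset.mem_insert_self a S)
    have step : (Matrix.of fun i j => if i ∈ insert a S then M i j - f i * M k0 j else M i j)
        = (Matrix.of fun i j => if i ∈ S then M i j - f i * M k0 j else M i j).updateRow a
          ((Matrix.of fun i j => if i ∈ S then M i j - f i * M k0 j else M i j) a
            + (-f a) • (Matrix.of fun i j => if i ∈ S then M i j - f i * M k0 j else M i j) k0) := by
      ext i j
      by_cases hia : i = a
      · subst hia
        rw [Matrix.updateRow_self]
        simp only [Matrix.of_apply, Pi.add_apply, Pi.smul_apply, smul_eq_mul]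
        rw [if_pos (Finset.mem_insert_self i S), if_neg ha, if_neg hk0S]
        ring
      · rw [Matrix.updateRow_ne hia]
        simp only [Matrix.of_apply, Finset.mem_insert, hia, false_or]
    rw [step, Matrix.det_updateRow_add_smul_self _ hak0, ih hk0S]

lemma bFrak_ne_zero (N k : ℕ) : bFrak N k ≠ 0 := by
  unfold bFrak
  apply div_ne_zero <;>
  · rw [Finset.prod_ne_zero_iff]
    intro r hr
    have h1 : 1 ≤ r := (Finset.mem_Icc.mp (Finset.mem_filter.mp hr).1).1
    exact Nat.cast_ne_zero.mpr (by omega)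

-- placeholders for already-proved lemmas

lemma part1 {N n : ℕ} (hN : 3 ≤ N) (hn : N ∣ n) (hn0 : 0 < n) (b : Fin n → ℕ)
    (hdet : (Matrix.of fun i j : Fin n => mEntry N (b i) (b j)).det ≠ 0) :
    ∀ r < N, (Finset.univ.filter (fun i : Fin n => b i % N = r)).card = n / N := by
  classical
  have hN0 : 0 < N := by omega
  set M : Matrix (Fin n) (Fin n) ℚ := Matrix.of fun i j : Fin n => mEntry N (b i) (b j) with hM
  set P : Finset (Fin n) := Finset.univ.filter (fun i => b i % N = 0) with hP
  have hex : ∃ k0 : Fin n, (P.Nonempty → b k0 % N = 0) := by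
    by_cases h : P.Nonempty
    · obtain ⟨x, hx⟩ := h
      rw [hP] at hx
      exact ⟨x, fun _ => (Finset.mem_filter.mp hx).2⟩
    · exact ⟨⟨0, hn0⟩, fun h' => absurd h' h⟩
  obtain ⟨k0, hk0P⟩ := hex
  set S : Finset (Fin n) := P.erase k0 with hS
  have hk0S : k0 ∉ S := Finset.notMem_erase _ _
  set f : Fin n → ℚ := fun i => bFrak N (b i) / bFrak N (b k0) with hf
  set W : Matrix (Fin n) (Fin n) ℚ :=
    Matrix.of fun i j => if i ∈ S then M i j - f i * M k0 j else M i j with hW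
  have hdetW : W.det ≠ 0 := by
    rw [hW, det_sub_rows M k0 f S hk0S]
    exact hdet
  obtain ⟨σ, hσ⟩ := exists_perm_of_det_ne_zero W hdetW
  have hg : ∀ i, b i % N < N := fun i => Nat.mod_lt _ hN0
  apply counting_lemma (by omega) hn _ hg σ k0
  intro i hik0
  have hWi := hσ i
  by_cases hiS : i ∈ S
  · -- row of residue 0 (modified row)
    have hPne : P.Nonempty := ⟨i, Finset.mem_of_mem_erase hiS⟩
    have hbk0 : b k0 % N = 0 := hk0P hPne
    have hbi0 : b i % N = 0 := by
      have := Finset.mem_of_mem_erase hiS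
      rw [hP] at this
      exact (Finset.mem_filter.mp this).2
    have hgoal : b (σ i) % N = N - 1 := by
      by_contra hne
      apply hWi
      have hsucc : (b (σ i) + 1) % N ≠ 0 := by
        intro h
        exact hne ((succ_mod_eq_zero_iff hN0).mp h)
      have hv1 : vEntry N (b i) (b (σ i)) = 1 := by
        rw [vEntry, if_neg (by rw [hbi0]; exact fun h => hsucc h.symm), if_pos hbi0]
      have hv2 : vEntry N (b k0) (b (σ i)) = 1 := by
        rw [vEntry, if_neg (by rw [hbk0]; exact fun h => hsucc h.symm), if_pos hbk0]
      rw [hW]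
      simp only [Matrix.of_apply, if_pos hiS]
      rw [hM]
      simp only [Matrix.of_apply]
      rw [mEntry, mEntry, hv1, hv2, hf]
      have hB0 : bFrak N (b k0) ≠ 0 := bFrak_ne_zero N (b k0)
      field_simp
      ring
    rw [hbi0, hgoal, Nat.zero_add, Nat.mod_eq_of_lt (by omega)]
  · -- unmodified row, nonzero residue
    have hbi0 : b i % N ≠ 0 := by
      intro h
      exact hiS (Finset.mem_erase.mpr ⟨hik0, by rw [hP]; exact Finset.mem_filter.mpr ⟨Finset.mem_univ i, h⟩⟩)
    have hWval : W i (σ i) = mEntry N (b i) (b (σ i)) := by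
      rw [hW]; simp only [Matrix.of_apply, if_neg hiS]; rw [hM]; simp only [Matrix.of_apply]
    rw [hWval] at hWi
    have hv : vEntry N (b i) (b (σ i)) ≠ 0 := by
      intro h
      apply hWi
      rw [mEntry, h, mul_zero]
    have hcond : b i % N = (b (σ i) + 1) % N := by
      by_contra hc
      apply hv
      rw [vEntry, if_neg hc, if_neg hbi0]
    have : (b i % N + (N - 1)) % N = b (σ i) % N := by
      rw [hcond, Nat.mod_add_mod, show b (σ i) + 1 + (N - 1) = b (σ i) + N by omega,
        Nat.add_mod_right]
    exact this.symm

lemma rowLen_eq_zero_of_le {μ : YoungDiagram} {r : ℕ} (h : μ.colLen 0 ≤ r) :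
    μ.rowLen r = 0 := by
  by_contra h0
  have h1 : (r, 0) ∈ μ := YoungDiagram.mem_iff_lt_rowLen.mpr (Nat.pos_of_ne_zero h0)
  have h2 := YoungDiagram.mem_iff_lt_colLen.mp h1
  omega

lemma mem_betaSet {μ : YoungDiagram} {n x : ℕ} :
    x ∈ betaSet μ n ↔ ∃ r, r < n ∧ μ.rowLen r + n - (r + 1) = x := by
  simp [betaSet, Finset.mem_image, Finset.mem_range]

lemma betaFun_lt {μ : YoungDiagram} {n r s : ℕ} (hrs : r < s) (hs : s < n) :
    μ.rowLen s + n - (s + 1) < μ.rowLen r + n - (r + 1) := by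
  have h1 := μ.rowLen_anti r s (le_of_lt hrs)
  omega

lemma betaSet_injOn {μ : YoungDiagram} {n : ℕ} :
    Set.InjOn (fun i => μ.rowLen i + n - (i + 1)) (Finset.range n) := by
  intro r hr s hs h
  simp only [Finset.coe_range, Set.mem_Iio] at hr hs
  have h' : μ.rowLen r + n - (r + 1) = μ.rowLen s + n - (s + 1) := h
  by_contra hne
  rcases Nat.lt_or_ge r s with h1 | h1
  · have := betaFun_lt (μ := μ) h1 hs; omega
  · have h2 : s < r := by omega
    have := betaFun_lt (μ := μ) h2 hr
    omega

lemma card_betaSet (μ : YoungDiagram) (n : ℕ) : (betaSet μ n).card = n := by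
  rw [betaSet, Finset.card_image_of_injOn betaSet_injOn, Finset.card_range]

lemma bot_iff_not_mem (μ : YoungDiagram) : μ = ⊥ ↔ (0, 0) ∉ μ := by
  constructor
  · rintro rfl; exact YoungDiagram.notMem_bot _
  · intro h
    ext ⟨a, b⟩
    simp only [YoungDiagram.cells_bot, Finset.notMem_empty, iff_false]
    intro hc
    exact h (μ.up_left_mem (Nat.zero_le a) (Nat.zero_le b) hc)

lemma exists_removable {N n : ℕ} (hN : 0 < N) (hn : N ∣ n) (μ : YoungDiagram)
    (hcol : μ.colLen 0 ≤ n) (hne : μ ≠ ⊥)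
    (hbal : ∀ r < N, ((betaSet μ n).filter (fun y => y % N = r)).card = n / N) :
    ∃ x ∈ betaSet μ n, N ≤ x ∧ x - N ∉ betaSet μ n := by
  by_contra hc
  push_neg at hc
  have h00 : (0, 0) ∈ μ := by
    by_contra h
    exact hne ((bot_iff_not_mem μ).mpr h)
  have hL0 : 0 < μ.rowLen 0 := YoungDiagram.mem_iff_lt_rowLen.mp h00
  have hn1 : 0 < n := lt_of_lt_of_le (YoungDiagram.mem_iff_lt_colLen.mp h00) hcol
  have hlt : ∀ x ∈ betaSet μ n, x < n := by
    intro x hx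
    set T := (betaSet μ n).filter (fun y => y % N = x % N) with hT
    have hxT : x ∈ T := Finset.mem_filter.mpr ⟨hx, rfl⟩
    have hclosed : ∀ y ∈ T, N ≤ y → y - N ∈ T := by
      intro y hy hNy
      obtain ⟨hyB, hymod⟩ := Finset.mem_filter.mp hy
      refine Finset.mem_filter.mpr ⟨hc y hyB hNy, ?_⟩
      have : y - N + N = y := Nat.sub_add_cancel hNy
      calc (y - N) % N = (y - N + N) % N := (Nat.add_mod_right _ _).symm
        _ = y % N := by rw [this]
        _ = x % N := hymod
    have hchain : ∀ i, i ≤ x / N → x - i * N ∈ T := by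
      intro i
      induction i with
      | zero => intro _; simpa using hxT
      | succ m ih =>
        intro hi
        have hmem := ih (by omega)
        have hmul : (m + 1) * N = m * N + N := by ring
        have h1 : (m + 1) * N ≤ (x / N) * N := Nat.mul_le_mul_right N hi
        have h2 : (x / N) * N ≤ x := Nat.div_mul_le_self x N
        have hge : N ≤ x - m * N := by omega
        have heq : x - (m + 1) * N = (x - m * N) - N := by omega
        rw [heq]
        exact hclosed _ hmem hge
    have hsub : (Finset.range (x / N + 1)).image (fun i => x - i * N) ⊆ T := by
      intro y hy
      obtain ⟨i, hi, rfl⟩ := Finset.mem_image.mp hy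
      exact hchain i (by simpa using Nat.lt_succ_iff.mp (Finset.mem_range.mp hi))
    have hcardim : ((Finset.range (x / N + 1)).image (fun i => x - i * N)).card
        = x / N + 1 := by
      rw [Finset.card_image_of_injOn, Finset.card_range]
      intro i hi j hj hij
      simp only [Finset.coe_range, Set.mem_Iio] at hi hj
      have hij' : x - i * N = x - j * N := hij
      by_contra hne2
      have hiN : i * N ≤ (x / N) * N := Nat.mul_le_mul_right N (by omega)
      have hjN : j * N ≤ (x / N) * N := Nat.mul_le_mul_right N (by omega)
      have h2 : (x / N) * N ≤ x := Nat.div_mul_le_self x N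
      rcases Nat.lt_or_ge i j with h1 | h1
      · have := (Nat.mul_lt_mul_right hN).mpr h1
        omega
      · have h3 : j < i := by omega
        have := (Nat.mul_lt_mul_right hN).mpr h3
        omega
    have hTc : T.card = n / N := hbal (x % N) (Nat.mod_lt _ hN)
    have hcard : x / N + 1 ≤ T.card := by
      rw [← hcardim]
      exact Finset.card_le_card hsub
    have hdivlt : x / N < n / N := by omega
    calc x < N * (x / N) + N := by
            have := Nat.div_add_mod x N
            have := Nat.mod_lt x hN
            omega
      _ = N * (x / N + 1) := by ring
      _ ≤ N * (n / N) := Nat.mul_le_mul_left N (by omega)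
      _ = n := Nat.mul_div_cancel' hn
  have hsubr : betaSet μ n ⊆ Finset.range n := fun x hx => Finset.mem_range.mpr (hlt x hx)
  have heq : betaSet μ n = Finset.range n :=
    Finset.eq_of_subset_of_card_le hsubr (by rw [card_betaSet, Finset.card_range])
  have hmem0 : μ.rowLen 0 + n - 1 ∈ betaSet μ n :=
    mem_betaSet.mpr ⟨0, hn1, by omega⟩
  rw [heq, Finset.mem_range] at hmem0
  omega

lemma remove_step {N n : ℕ} (hN : 0 < N) (μ : YoungDiagram) (hcol : μ.colLen 0 ≤ n)
    (x : ℕ) (hx : x ∈ betaSet μ n) (hxN : N ≤ x) (hx2 : x - N ∉ betaSet μ n) :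
    ∃ ν : YoungDiagram, RemoveHook N μ ν ∧ ν.colLen 0 ≤ n ∧
      betaSet ν n = insert (x - N) ((betaSet μ n).erase x) ∧ ν.card + N = μ.card := by
  classical
  obtain ⟨i, hi_lt, hβi⟩ := mem_betaSet.mp hx
  have hβ_mem : ∀ r, r < n → μ.rowLen r + n - (r + 1) ∈ betaSet μ n :=
    fun r hr => mem_betaSet.mpr ⟨r, hr, rfl⟩
  set F := (Finset.range n).filter (fun r => x - N < μ.rowLen r + n - (r + 1)) with hF
  have hiF : i ∈ F := Finset.mem_filter.mpr ⟨Finset.mem_range.mpr hi_lt, by omega⟩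
  set j := F.max' ⟨i, hiF⟩ with hj
  have hjF : j ∈ F := F.max'_mem _
  have hj_lt : j < n := Finset.mem_range.mp (Finset.mem_filter.mp hjF).1
  have hij : i ≤ j := F.le_max' i hiF
  have hjx : x - N < μ.rowLen j + n - (j + 1) := (Finset.mem_filter.mp hjF).2
  have hj_succ : j + 1 < n → μ.rowLen (j + 1) + n - (j + 2) < x - N := by
    intro h
    have hnot : j + 1 ∉ F := fun hmem => absurd (F.le_max' _ hmem) (by omega)
    have h1 : ¬(x - N < μ.rowLen (j + 1) + n - (j + 2)) := fun hlt =>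
      hnot (Finset.mem_filter.mpr ⟨Finset.mem_range.mpr h, by
        have : (j + 1) + 1 = j + 2 := rfl
        omega⟩)
    have hne : μ.rowLen (j + 1) + n - (j + 2) ≠ x - N := fun heq =>
      hx2 (heq ▸ hβ_mem (j + 1) h)
    omega
  have hLj : 1 ≤ μ.rowLen j := by
    by_contra h0
    have hLj0 : μ.rowLen j = 0 := by omega
    set s := n - 1 - (x - N) with hs
    have hjs : j < s ∧ s < n := by omega
    have hLs : μ.rowLen s = 0 := by
      have := μ.rowLen_anti j s (by omega)
      omega
    have heq : μ.rowLen s + n - (s + 1) = x - N := by omega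
    exact hx2 (heq ▸ hβ_mem s (by omega))
  have hL1 : ∀ r, r ≤ j → 1 ≤ μ.rowLen r := fun r hr => le_trans hLj (μ.rowLen_anti r j hr)
  have hK3 : n ≤ x - N + (j + 1) := by
    rcases Nat.lt_or_ge (j + 1) n with h | h
    · have := hj_succ h; omega
    · omega
  set c0 := x - N - (n - (j + 1)) with hc0def
  have hc0add : c0 + (n - (j + 1)) = x - N := by omega
  have hc0Lj : c0 + 1 ≤ μ.rowLen j := by omega
  have hc0L : μ.rowLen (j + 1) ≤ c0 := by
    rcases Nat.lt_or_ge (j + 1) n with h | h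
    · have := hj_succ h; omega
    · have : μ.rowLen (j + 1) = 0 := rowLen_eq_zero_of_le (le_trans hcol h)
      omega
  set g : ℕ → ℕ := fun r => if r < i then μ.rowLen r
    else if r < j then μ.rowLen (r + 1) - 1
    else if r = j then c0 else μ.rowLen r with hg
  have hgI : ∀ r, r < i → g r = μ.rowLen r := by
    intro r h; simp only [hg]; rw [if_pos h]
  have hgM : ∀ r, i ≤ r → r < j → g r = μ.rowLen (r + 1) - 1 := by
    intro r h1 h2; simp only [hg]; rw [if_neg (by omega), if_pos h2]
  have hgJ : g j = c0 := by
    simp only [hg]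
    rw [if_neg (by omega), if_neg (by omega)]
    simp
  have hgO : ∀ r, j < r → g r = μ.rowLen r := by
    intro r h; simp only [hg]; rw [if_neg (by omega), if_neg (by omega), if_neg (by omega)]
  have hgle : ∀ r, g r ≤ μ.rowLen r := by
    intro r
    rcases Nat.lt_or_ge r i with h1 | h1
    · rw [hgI r h1]
    · rcases Nat.lt_or_ge r j with h2 | h2
      · rw [hgM r h1 h2]
        have := μ.rowLen_anti r (r + 1) (Nat.le_succ r)
        omega
      · rcases Nat.eq_or_lt_of_le h2 with h3 | h3
        · rw [← h3, hgJ]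
          have h4 : c0 + 1 ≤ μ.rowLen j := hc0Lj
          omega
        · rw [hgO r h3]
  have hganti : ∀ r, g (r + 1) ≤ g r := by
    intro r
    have ha1 := μ.rowLen_anti r (r + 1) (Nat.le_succ r)
    rcases Nat.lt_or_ge (r + 1) i with h1 | h1
    · rw [hgI (r + 1) h1, hgI r (by omega)]; exact ha1
    · rcases Nat.lt_or_ge r i with h2 | h2
      · calc g (r + 1) ≤ μ.rowLen (r + 1) := hgle (r + 1)
          _ ≤ μ.rowLen r := ha1
          _ = g r := (hgI r h2).symm
      · rcases Nat.lt_or_ge r j with h3 | h3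
        · rw [hgM r h2 h3]
          rcases Nat.lt_or_ge (r + 1) j with h4 | h4
          · rw [hgM (r + 1) (by omega) h4]
            have := μ.rowLen_anti (r + 1) (r + 1 + 1) (Nat.le_succ _)
            omega
          · have hrj : r + 1 = j := by omega
            rw [hrj, hgJ]
            have h5 : c0 + 1 ≤ μ.rowLen j := hc0Lj
            omega
        · rcases Nat.eq_or_lt_of_le h3 with h4 | h4
          · have hgr : g r = c0 := by rw [← h4]; exact hgJ
            have hgr1 : g (r + 1) = μ.rowLen (r + 1) := hgO (r + 1) (by omega)
            have h5 : μ.rowLen (r + 1) ≤ c0 := by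
              have h6 := hc0L
              rw [h4] at h6
              exact h6
            omega
          · rw [hgO r h4, hgO (r + 1) (by omega)]; exact ha1
  have hgantitone : Antitone g := antitone_nat_of_succ_le hganti
  have hlower : IsLowerSet (↑(μ.cells.filter (fun c => c.2 < g c.1)) : Set (ℕ × ℕ)) := by
    intro p q hqp hp
    simp only [Finset.coe_filter, Set.mem_setOf_eq, Finset.mem_coe, YoungDiagram.mem_cells] at *
    obtain ⟨hmem, hlt⟩ := hp
    refine ⟨μ.isLowerSet hqp hmem, ?_⟩
    calc q.2 ≤ p.2 := hqp.2
      _ < g p.1 := hlt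
      _ ≤ g q.1 := hgantitone hqp.1
  set ν : YoungDiagram := ⟨μ.cells.filter (fun c => c.2 < g c.1), hlower⟩ with hν
  have hνcells : ν.cells = μ.cells.filter (fun c => c.2 < g c.1) := by rw [hν]
  have hmemν : ∀ r c : ℕ, ((r, c) ∈ ν.cells ↔ c < g r) := by
    intro r c
    rw [hνcells]
    constructor
    · intro h
      exact (Finset.mem_filter.mp h).2
    · intro h
      refine Finset.mem_filter.mpr ⟨?_, h⟩
      rw [YoungDiagram.mem_cells, YoungDiagram.mem_iff_lt_rowLen]
      exact lt_of_lt_of_le h (hgle r)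
  have hrowν : ∀ r, ν.rowLen r = g r := by
    intro r
    have h2 : ∀ k, k < ν.rowLen r ↔ k < g r := fun k =>
      (YoungDiagram.mem_iff_lt_rowLen (μ := ν) (i := r) (j := k)).symm.trans (hmemν r k)
    have h3 := h2 (ν.rowLen r)
    have h4 := h2 (g r)
    omega
  have hsub : ν.cells ⊆ μ.cells := by rw [hνcells]; exact Finset.filter_subset _ _
  have hmemD : ∀ r c : ℕ, ((r, c) ∈ μ.cells \ ν.cells ↔ (g r ≤ c ∧ c < μ.rowLen r)) := by
    intro r c
    rw [Finset.mem_sdiff]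
    constructor
    · rintro ⟨h1, h2⟩
      have h3 : c < μ.rowLen r := YoungDiagram.mem_iff_lt_rowLen.mp
        (by rwa [YoungDiagram.mem_cells] at h1)
      have h4 : ¬c < g r := fun hcg => h2 ((hmemν r c).mpr hcg)
      omega
    · rintro ⟨h1, h2⟩
      refine ⟨?_, ?_⟩
      · rw [YoungDiagram.mem_cells, YoungDiagram.mem_iff_lt_rowLen]; exact h2
      · intro hc
        have := (hmemν r c).mp hc
        omega
  have hDrow : ∀ p : ℕ × ℕ, p ∈ μ.cells \ ν.cells → i ≤ p.1 ∧ p.1 ≤ j := by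
    rintro ⟨r, c⟩ hp
    have h1 := (hmemD r c).mp hp
    constructor
    · by_contra h
      rw [hgI r (by omega)] at h1
      omega
    · by_contra h
      rw [hgO r (by omega)] at h1
      omega
  -- cardinality of the removed set
  have hDeq : μ.cells \ ν.cells
      = (Finset.Icc i j).biUnion (fun r => {r} ×ˢ Finset.Ico (g r) (μ.rowLen r)) := by
    ext ⟨r, c⟩
    simp only [Finset.mem_biUnion, Finset.mem_Icc, Finset.mem_product, Finset.mem_singleton,
      Finset.mem_Ico]
    constructor
    · intro h
      have h2 := (hmemD r c).mp h
      have h3 := hDrow (r, c) h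
      exact ⟨r, ⟨h3.1, h3.2⟩, rfl, h2.1, h2.2⟩
    · rintro ⟨r', ⟨hir, hrj⟩, rfl, h3, h4⟩
      exact (hmemD _ c).mpr ⟨h3, h4⟩
  have hterm : ∀ r ∈ Finset.Icc i j,
      ({r} ×ˢ Finset.Ico (g r) (μ.rowLen r)).card = μ.rowLen r - g r := by
    intro r _
    rw [Finset.card_product, Finset.card_singleton, one_mul, Nat.card_Ico]
  have htel : ∀ m, i + m < j → ∑ r ∈ Finset.Icc i (i + m), (μ.rowLen r - g r)
      = μ.rowLen i + (m + 1) - μ.rowLen (i + m + 1) := by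
    intro m
    induction m with
    | zero =>
      intro h
      simp only [Nat.add_zero]
      rw [Finset.Icc_self, Finset.sum_singleton]
      rw [hgM i (le_refl i) (by omega)]
      have h1 := hL1 (i + 1) (by omega)
      have h2 := μ.rowLen_anti i (i + 1) (Nat.le_succ i)
      omega
    | succ m ih =>
      intro h
      have ih' := ih (by omega)
      rw [show i + (m + 1) = (i + m) + 1 by omega]
      rw [Finset.sum_Icc_succ_top (by omega)]
      rw [ih', hgM (i + m + 1) (by omega) (by omega)]
      have h1 := hL1 (i + m + 2) (by omega)
      have h2 := μ.rowLen_anti (i + m + 1) (i + m + 2) (Nat.le_succ _)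
      have h3 := μ.rowLen_anti i (i + m + 1) (by omega)
      have h4 : i + m + 1 + 1 = i + m + 2 := by omega
      rw [h4]
      omega
  have hLi : μ.rowLen i + n = x + i + 1 := by omega
  have hc0n : c0 + n = x - N + j + 1 := by omega
  have hcardD : (μ.cells \ ν.cells).card = N := by
    rw [hDeq, Finset.card_biUnion]
    · rw [Finset.sum_congr rfl hterm]
      rcases Nat.eq_or_lt_of_le hij with h1 | h1
      · rw [← h1, Finset.Icc_self, Finset.sum_singleton]
        rw [← h1] at hgJ hc0n
        rw [hgJ]
        omega
      · have h2 : j = i + (j - i - 1) + 1 := by omega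
        rw [show Finset.Icc i j = Finset.Icc i ((i + (j - i - 1)) + 1) by rw [← h2]]
        rw [Finset.sum_Icc_succ_top (by omega)]
        have h3 := htel (j - i - 1) (by omega)
        rw [h3, show i + (j - i - 1) + 1 = j by omega, hgJ]
        have h4 := μ.rowLen_anti i j hij
        omega
    · intro a ha b hb hab
      simp only [Finset.disjoint_left]
      rintro ⟨p, q⟩ h1 h2
      simp only [Finset.mem_product, Finset.mem_singleton] at h1 h2
      exact hab (h1.1.symm.trans h2.1)
  -- boundary
  have hbound : ∀ c ∈ μ.cells \ ν.cells, (c.1 + 1, c.2 + 1) ∉ μ := by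
    rintro ⟨r, c⟩ hc
    have h1 := (hmemD r c).mp hc
    have h2 := hDrow (r, c) hc
    rw [YoungDiagram.mem_iff_lt_rowLen]
    simp only [not_lt]
    rcases Nat.lt_or_ge r j with h3 | h3
    · rw [hgM r h2.1 h3] at h1
      have h4 := μ.rowLen_anti (r + 1) (r + 1) (le_refl _)
      have h5 := hL1 (r + 1) (by omega)
      omega
    · have hrj : r = j := by omega
      subst hrj
      rw [hgJ] at h1
      have := hc0L
      omega
  -- connectivity
  have hbaseD : (j, c0) ∈ μ.cells \ ν.cells := (hmemD j c0).mpr (by rw [hgJ]; omega)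
  have hconn : CellsConnected (μ.cells \ ν.cells) := by
    intro p hp q hq
    set D := μ.cells \ ν.cells with hD
    set R : (ℕ × ℕ) → (ℕ × ℕ) → Prop := fun a b => a ∈ D ∧ b ∈ D ∧ CellAdj a b with hR
    have hRsymm : Symmetric R := by
      rintro a b ⟨h1, h2, h3⟩
      refine ⟨h2, h1, ?_⟩
      rcases h3 with ⟨e, h4 | h4⟩ | ⟨e, h4 | h4⟩
      · exact Or.inl ⟨e.symm, Or.inr h4⟩
      · exact Or.inl ⟨e.symm, Or.inl h4⟩
      · exact Or.inr ⟨e.symm, Or.inr h4⟩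
      · exact Or.inr ⟨e.symm, Or.inl h4⟩
    have hrowconn : ∀ r c k : ℕ, (r, c) ∈ D → (r, c + k) ∈ D →
        Relation.ReflTransGen R (r, c) (r, c + k) := by
      intro r c k
      induction k with
      | zero => intro _ _; exact Relation.ReflTransGen.refl
      | succ m ih =>
        intro h1 h2
        have h3 := (hmemD r c).mp h1
        have h4 := (hmemD r (c + (m + 1))).mp h2
        have hmid : (r, c + m) ∈ D := (hmemD r (c + m)).mpr (by omega)
        have hstep : R (r, c + m) (r, c + (m + 1)) :=
          ⟨hmid, h2, Or.inl ⟨rfl, Or.inr (by omega)⟩⟩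
        exact Relation.ReflTransGen.tail (ih h1 hmid) hstep
    have hrow2 : ∀ r c c' : ℕ, (r, c) ∈ D → (r, c') ∈ D →
        Relation.ReflTransGen R (r, c) (r, c') := by
      intro r c c' h1 h2
      rcases Nat.le_total c c' with h | h
      · obtain ⟨k, rfl⟩ := Nat.exists_eq_add_of_le h
        exact hrowconn r c k h1 h2
      · obtain ⟨k, rfl⟩ := Nat.exists_eq_add_of_le h
        exact (by haveI : Std.Symm R := ⟨fun _ _ h => hRsymm h⟩; exact Relation.ReflTransGen.symmetric.symm _ _ (hrowconn r c' k h2 h1))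
    have hclimb : ∀ d r c, r + d = j → (r, c) ∈ D →
        Relation.ReflTransGen R (r, c) (j, c0) := by
      intro d
      induction d with
      | zero =>
        intro r c h1 h2
        have hrj : r = j := by omega
        subst hrj
        exact hrow2 j c c0 h2 hbaseD
      | succ m ih =>
        intro r c h1 h2
        have hrj : r < j := by omega
        have hir : i ≤ r := (hDrow (r, c) h2).1
        have hL1r := hL1 (r + 1) (by omega)
        have m1 : (r, μ.rowLen (r + 1) - 1) ∈ D := by
          refine (hmemD _ _).mpr ?_
          rw [hgM r hir hrj]
          have := μ.rowLen_anti r (r + 1) (Nat.le_succ r)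
          omega
        have m2 : (r + 1, μ.rowLen (r + 1) - 1) ∈ D := by
          refine (hmemD _ _).mpr ⟨?_, by omega⟩
          rcases Nat.lt_or_ge (r + 1) j with h4 | h4
          · rw [hgM (r + 1) (by omega) h4]
            have := μ.rowLen_anti (r + 1) (r + 1 + 1) (Nat.le_succ _)
            omega
          · have h5 : r + 1 = j := by omega
            rw [h5, hgJ]
            have h6 : c0 + 1 ≤ μ.rowLen j := hc0Lj
            omega
        have hstep : R (r, μ.rowLen (r + 1) - 1) (r + 1, μ.rowLen (r + 1) - 1) :=
          ⟨m1, m2, Or.inr ⟨rfl, Or.inr rfl⟩⟩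
        exact ((hrow2 r c _ h2 m1).tail hstep).trans (ih (r + 1) _ (by omega) m2)
    obtain ⟨pr, pc⟩ := p
    obtain ⟨qr, qc⟩ := q
    have hp1 := hDrow (pr, pc) hp
    have hq1 := hDrow (qr, qc) hq
    exact (hclimb (j - pr) pr pc (by omega) hp).trans
      (by haveI : Std.Symm R := ⟨fun _ _ h => hRsymm h⟩; exact Relation.ReflTransGen.symmetric.symm _ _ (hclimb (j - qr) qr qc (by omega) hq))
  -- colLen bound
  have hcolν : ν.colLen 0 ≤ n := by
    by_contra h
    have h1 : (n, 0) ∈ ν := YoungDiagram.mem_iff_lt_colLen.mpr (by omega)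
    have h2 := (hmemν n 0).mp h1
    rw [hgO n (by omega)] at h2
    have h3 : μ.rowLen n = 0 := rowLen_eq_zero_of_le hcol
    omega
  -- beta set of ν
  have hβν : betaSet ν n = insert (x - N) ((betaSet μ n).erase x) := by
    ext y
    simp only [Finset.mem_insert, Finset.mem_erase]
    rw [mem_betaSet]
    constructor
    · rintro ⟨r, hr, hry⟩
      rw [hrowν r] at hry
      rcases Nat.lt_or_ge r i with h1 | h1
      · right
        rw [hgI r h1] at hry
        refine ⟨?_, hry ▸ hβ_mem r hr⟩
        have := betaFun_lt (μ := μ) (n := n) h1 hi_lt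
        omega
      · rcases Nat.lt_or_ge r j with h2 | h2
        · rw [hgM r h1 h2] at hry
          have hLr1 := hL1 (r + 1) (by omega)
          have hy : μ.rowLen (r + 1) + n - (r + 1 + 1) = y := by omega
          right
          refine ⟨?_, hy ▸ hβ_mem (r + 1) (by omega)⟩
          have := betaFun_lt (μ := μ) (n := n) (show i < r + 1 by omega) (show r + 1 < n by omega)
          omega
        · rcases Nat.eq_or_lt_of_le h2 with h3 | h3
          · left
            rw [← h3] at hry
            rw [hgJ] at hry
            omega
          · right
            rw [hgO r h3] at hry
            refine ⟨?_, hry ▸ hβ_mem r hr⟩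
            have := betaFun_lt (μ := μ) (n := n) (show i < r by omega) hr
            omega
    · intro hy
      rcases hy with rfl | ⟨hyx, hyB⟩
      · exact ⟨j, hj_lt, by rw [hrowν, hgJ]; omega⟩
      · obtain ⟨r, hr, hry⟩ := mem_betaSet.mp hyB
        have hri : r ≠ i := fun h => hyx (by rw [h] at hry; omega)
        rcases Nat.lt_or_ge r i with h1 | h1
        · exact ⟨r, hr, by rw [hrowν, hgI r h1]; exact hry⟩
        · have h1' : i < r := by omega
          rcases le_or_gt r j with h2 | h2
          · refine ⟨r - 1, by omega, ?_⟩
            rw [hrowν, hgM (r - 1) (by omega) (by omega)]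
            have hrr : r - 1 + 1 = r := by omega
            rw [hrr]
            have := hL1 r h2
            omega
          · exact ⟨r, hr, by rw [hrowν, hgO r h2]; exact hry⟩
  -- card relation
  have hcard : ν.card + N = μ.card := by
    have h1 : (μ.cells \ ν.cells).card = μ.card - ν.card := Finset.card_sdiff_of_subset hsub
    have h2 : ν.card ≤ μ.card := Finset.card_le_card hsub
    omega
  exact ⟨ν, ⟨hsub, hcardD, hbound, hconn⟩, hcolν, hβν, hcard⟩

lemma bal_update {N m : ℕ} (hN : 0 < N) (B : Finset ℕ) (x : ℕ) (hx : x ∈ B) (hxN : N ≤ x)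
    (hx2 : x - N ∉ B) (hbal : ∀ r < N, (B.filter (fun y => y % N = r)).card = m) :
    ∀ r < N, ((insert (x - N) (B.erase x)).filter (fun y => y % N = r)).card = m := by
  intro r hr
  have hmod : (x - N) % N = x % N := by
    conv_rhs => rw [← Nat.sub_add_cancel hxN]
    rw [Nat.add_mod_right]
  rw [Finset.filter_insert]
  by_cases hcase : x % N = r
  · rw [if_pos (by rw [hmod]; exact hcase)]
    rw [Finset.filter_erase]
    have hxf : x ∈ B.filter (fun y => y % N = r) := Finset.mem_filter.mpr ⟨hx, hcase⟩
    rw [Finset.card_insert_of_notMem (fun hmem => hx2 (Finset.mem_of_mem_filter _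
      (Finset.mem_of_mem_erase hmem)))]
    rw [Finset.card_erase_of_mem hxf, hbal r hr]
    have : 1 ≤ (B.filter (fun y => y % N = r)).card := Finset.card_pos.mpr ⟨x, hxf⟩
    rw [hbal r hr] at this
    omega
  · rw [if_neg (by rw [hmod]; exact hcase)]
    rw [Finset.filter_erase]
    rw [Finset.erase_eq_of_notMem (a := x) (s := Finset.filter (fun y => y % N = r) B)
      (fun hmem => hcase (Finset.mem_filter.mp hmem).2)]
    exact hbal r hr

lemma balanced_imp_TDec {N n : ℕ} (hN : 0 < N) (hn : N ∣ n) :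
    ∀ k (μ : YoungDiagram), μ.card ≤ k → μ.colLen 0 ≤ n →
    (∀ r < N, ((betaSet μ n).filter (fun y => y % N = r)).card = n / N) →
    TDecomposable N μ := by
  intro k
  induction k with
  | zero =>
    intro μ hk _ _
    have hc0 : μ.card = 0 := Nat.le_zero.mp hk
    have : μ.cells = ∅ := Finset.card_eq_zero.mp hc0
    have hμ : μ = ⊥ := by
      rw [bot_iff_not_mem]
      intro h
      rw [← YoungDiagram.mem_cells, this] at h
      exact Finset.notMem_empty _ h
    rw [hμ]
    exact Relation.ReflTransGen.refl
  | succ k ih =>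
    intro μ hk hcol hbal
    by_cases hμ : μ = ⊥
    · rw [hμ]
      exact Relation.ReflTransGen.refl
    · obtain ⟨x, hxB, hxN, hx2⟩ := exists_removable hN hn μ hcol hμ hbal
      obtain ⟨ν, hhook, hcolν, hβν, hcard⟩ := remove_step hN μ hcol x hxB hxN hx2
      have hbalν : ∀ r < N, ((betaSet ν n).filter (fun y => y % N = r)).card = n / N := by
        rw [hβν]
        exact bal_update hN _ x hxB hxN hx2 hbal
      have hνk : ν.card ≤ k := by omega
      exact Relation.ReflTransGen.head hhook (ih ν hνk hcolν hbalν)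


end Aux

/-- **A nonzero determinant forces `N`-decomposability.**  If the matrix `M(λ)` with entries
`m_N(b_i, b_j)`, for the decreasing enumeration `b` of the β-set `B_n(λ)`, has nonzero
determinant, then each residue class mod `N` contains exactly `n/N` of the `b_i`;
equivalently, `λ` is `N`-decomposable. -/
theorem det_ne_zero_imp_decomposable (N : ℕ) (hN : 3 ≤ N) (lam : YoungDiagram)
    (n : ℕ) (hn : N ∣ n) (hparts : lam.colLen 0 ≤ n)
    (b : Fin n → ℕ) (hb : StrictAnti b) (hbeta : Finset.image b Finset.univ = betaSet lam n)
    (hdet : Matrix.det (Matrix.of fun i j : Fin n => mEntry N (b i) (b j)) ≠ 0) :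
    (∀ r < N, (Finset.univ.filter (fun i : Fin n => b i % N = r)).card = n / N) ∧
      TDecomposable N lam := by
  classical
  rcases Nat.eq_zero_or_pos n with hn0 | hn0
  · subst hn0
    constructor
    · intro r hr
      simp
    · have hbot : lam = ⊥ := by
        rw [bot_iff_not_mem]
        intro h
        have := YoungDiagram.mem_iff_lt_colLen.mp h
        omega
      rw [hbot]
      exact Relation.ReflTransGen.refl
  · have hpart1 : ∀ r < N, (Finset.univ.filter (fun i : Fin n => b i % N = r)).card = n / N :=
      part1 hN hn hn0 b hdet
    refine ⟨hpart1, ?_⟩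
    have htrans : ∀ r < N, ((betaSet lam n).filter (fun y => y % N = r)).card = n / N := by
      intro r hr
      rw [← hbeta, Finset.filter_image, Finset.card_image_of_injective _ hb.injective]
      exact hpart1 r hr
    exact balanced_imp_TDec (by omega) hn lam.card lam (le_refl _) hparts htrans
end

section
/- Fix an integer N ≥ 1 and a complex number q with 0 < |q| < 1, and define Θ(u) = (e^{u/2} − e^{−u/2}) ∏_{m≥1} (1 − e^u q^m)(1 − e^{−u} q^m)/(1 − q^m)² and Θ_N(u) = (e^{u/2} − e^{−u/2}) ∏_{m≥1} (1 − e^u q^{Nm})(1 − e^{−u} q^{Nm})/(1 − q^{Nm})² for u ∈ ℂ. Then for all u, v ∈ ℂ such that Θ_N(Nv) ≠ 0 and Θ(v + 2πir/N) ≠ 0 for every r ∈ {0,…,N−1}, one has Θ_N(Nu)/Θ_N(Nv) = ∏_{r=0}^{N−1} Θ(u + 2πir/N)/Θ(v + 2πir/N). -/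
open scoped BigOperators

/-- The theta function
`Θ(u) = (e^{u/2} − e^{−u/2}) ∏_{m ≥ 1} (1 − e^u q^m)(1 − e^{−u} q^m)/(1 − q^m)²`. -/
noncomputable def Theta (q u : ℂ) : ℂ :=
  (Complex.exp (u / 2) - Complex.exp (-u / 2)) *
    ∏' m : ℕ, ((1 - Complex.exp u * q ^ (m + 1)) * (1 - Complex.exp (-u) * q ^ (m + 1)) /
      (1 - q ^ (m + 1)) ^ 2)

open Complex Finset Filter

section algebraic
variable {N : ℕ}

lemma prod_neg' {ι : Type*} (s : Finset ι) (f : ι → ℂ) :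
    ∏ i ∈ s, (-f i) = (-1) ^ s.card * ∏ i ∈ s, f i := by
  rw [← Finset.prod_const, ← Finset.prod_mul_distrib]
  exact Finset.prod_congr rfl fun i _ => by ring

lemma prod_nthRoots_sub (hN : 0 < N) {ζ : ℂ} (hζ : IsPrimitiveRoot ζ N) (a : ℂ) :
    ∏ μ ∈ Polynomial.nthRootsFinset N (1 : ℂ), (a - μ) = a ^ N - 1 := by
  have h := Polynomial.X_pow_sub_one_eq_prod hN hζ
  have h2 := congrArg (Polynomial.eval a) h
  simpa [Polynomial.eval_prod] using h2.symm

lemma prod_nthRoots (hN : 0 < N) {ζ : ℂ} (hζ : IsPrimitiveRoot ζ N) :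
    ∏ μ ∈ Polynomial.nthRootsFinset N (1 : ℂ), μ = (-1) ^ (N + 1) := by
  have h := prod_nthRoots_sub hN hζ 0
  simp only [zero_sub, zero_pow hN.ne'] at h
  rw [prod_neg' _ _, hζ.card_nthRootsFinset] at h
  have := congrArg (fun x => (-1 : ℂ) ^ N * x) h
  simp only [← mul_assoc, ← pow_add] at this
  rw [show N + N = 2 * N by ring] at this
  simp only [pow_mul, neg_one_sq, one_pow, one_mul] at this
  rw [this]; ring

lemma prod_nthRoots_one_sub (hN : 0 < N) {ζ : ℂ} (hζ : IsPrimitiveRoot ζ N) (a : ℂ) :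
    ∏ μ ∈ Polynomial.nthRootsFinset N (1 : ℂ), (1 - a * μ) = 1 - a ^ N := by
  have hne : ∀ μ ∈ Polynomial.nthRootsFinset N (1 : ℂ), μ ≠ 0 := by
    intro μ hμ h0
    rw [Polynomial.mem_nthRootsFinset hN, h0, zero_pow hN.ne'] at hμ
    exact zero_ne_one hμ
  have key : ∀ μ ∈ Polynomial.nthRootsFinset N (1 : ℂ), (1 - a * μ) = (-μ) * (a - μ⁻¹) := by
    intro μ hμ
    field_simp [hne μ hμ]
    ring
  rw [Finset.prod_congr rfl key, Finset.prod_mul_distrib]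
  have hinv : ∏ μ ∈ Polynomial.nthRootsFinset N (1 : ℂ), (a - μ⁻¹)
      = ∏ μ ∈ Polynomial.nthRootsFinset N (1 : ℂ), (a - μ) := by
    refine Finset.prod_nbij' (fun μ => μ⁻¹) (fun μ => μ⁻¹) ?_ ?_ ?_ ?_ ?_
    · intro μ hμ
      rw [Polynomial.mem_nthRootsFinset hN] at hμ ⊢
      simp only [inv_pow, hμ, inv_one]
    · intro μ hμ
      rw [Polynomial.mem_nthRootsFinset hN] at hμ ⊢
      simp only [inv_pow, hμ, inv_one]
    · intro μ hμ; exact inv_inv μ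
    · intro μ hμ; exact inv_inv μ
    · intro μ hμ; rfl
  have hneg : ∏ μ ∈ Polynomial.nthRootsFinset N (1 : ℂ), (-μ) = (-1 : ℂ) ^ N * (-1) ^ (N + 1) := by
    rw [prod_neg' _ _, hζ.card_nthRootsFinset, prod_nthRoots hN hζ]
  have hsign : (-1 : ℂ) ^ N * (-1) ^ (N + 1) = -1 := by
    rw [← pow_add, show N + (N + 1) = 2 * N + 1 by ring, pow_succ, pow_mul]
    simp
  rw [hinv, hneg, prod_nthRoots_sub hN hζ, hsign]
  ring

lemma prod_range_one_sub (hN : 0 < N) {ξ : ℂ} (hξ : IsPrimitiveRoot ξ N) (a : ℂ) :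
    ∏ r ∈ Finset.range N, (1 - a * ξ ^ r) = 1 - a ^ N := by
  haveI : NeZero N := ⟨hN.ne'⟩
  rw [← prod_nthRoots_one_sub hN hξ a]
  refine Finset.prod_nbij (fun r => ξ ^ r) ?_ ?_ ?_ ?_
  · intro r hr
    rw [Polynomial.mem_nthRootsFinset hN, ← pow_mul, mul_comm, pow_mul, hξ.pow_eq_one, one_pow]
  · intro r hr s hs h
    exact hξ.pow_inj (Finset.mem_range.mp (by simpa using hr))
      (Finset.mem_range.mp (by simpa using hs)) h
  · intro μ hμ
    rw [Finset.mem_coe, Polynomial.mem_nthRootsFinset hN] at hμ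
    obtain ⟨i, hi, rfl⟩ := hξ.eq_pow_of_pow_eq_one hμ
    exact ⟨i, by simpa using hi, rfl⟩
  · intro r hr; rfl

end algebraic

section analytic

lemma hasProd_zero_of_zero {f : ℕ → ℂ} {m : ℕ} (h : f m = 0) : HasProd f 0 := by
  have he : (fun s : Finset ℕ => ∏ i ∈ s, f i) =ᶠ[atTop] fun _ => (0 : ℂ) := by
    filter_upwards [Filter.eventually_ge_atTop ({m} : Finset ℕ)] with s hs
    exact Finset.prod_eq_zero (by simpa using hs) h
  exact Tendsto.congr' he.symm tendsto_const_nhds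

lemma summable_log_one_sub {q : ℂ} (hq1 : ‖q‖ < 1) (a : ℂ) :
    Summable (fun m : ℕ => Complex.log (1 - a * q ^ (m + 1))) := by
  have hq1' : ‖q‖ < 1 := hq1
  have ht : Filter.Tendsto (fun m : ℕ => a * q ^ (m + 1)) atTop (nhds 0) := by
    have := (tendsto_pow_atTop_nhds_zero_of_norm_lt_one hq1').const_mul (a * q)
    rw [mul_zero] at this
    exact this.congr (fun m => by ring)
  have hev : ∀ᶠ m : ℕ in atTop, ‖a * q ^ (m + 1)‖ ≤ 1 / 2 := by
    have := ht.norm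
    rw [norm_zero] at this
    exact this.eventually_le_const (by norm_num)
  refine Summable.of_norm_bounded_eventually_nat
    (g := fun m => 3 / 2 * (‖a‖ * ‖q‖ ^ (m + 1))) ?_ ?_
  · apply Summable.mul_left
    apply Summable.mul_left
    exact ((summable_geometric_of_lt_one (norm_nonneg q) hq1').mul_right ‖q‖).congr
      (fun m => by rw [pow_succ])
  · filter_upwards [hev] with m hm
    have h1 : (1 : ℂ) - a * q ^ (m + 1) = 1 + -(a * q ^ (m + 1)) := by ring
    rw [h1]
    have := Complex.norm_log_one_add_half_le_self (z := -(a * q ^ (m + 1)))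
      (by rwa [norm_neg])
    refine this.trans ?_
    rw [norm_neg, norm_mul, norm_pow]

lemma mult_one_sub {q : ℂ} (hq1 : ‖q‖ < 1) (a : ℂ) :
    Multipliable (fun m : ℕ => 1 - a * q ^ (m + 1)) := by
  by_cases h : ∀ m : ℕ, 1 - a * q ^ (m + 1) ≠ 0
  · exact Complex.multipliable_of_summable_log (summable_log_one_sub hq1 a)
  · push_neg at h
    obtain ⟨m, hm⟩ := h
    exact ⟨0, hasProd_zero_of_zero hm⟩

lemma one_sub_pow_ne_zero {q : ℂ} (hq1 : ‖q‖ < 1) (m : ℕ) :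
    1 - q ^ (m + 1) ≠ 0 := by
  intro h
  have h1 : q ^ (m + 1) = 1 := by linear_combination -h
  have : ‖q ^ (m + 1)‖ < 1 := by
    rw [norm_pow]
    exact pow_lt_one₀ (norm_nonneg q) hq1 (Nat.succ_ne_zero m)
  rw [h1] at this
  simp at this

lemma mult_inv_one_sub {q : ℂ} (hq1 : ‖q‖ < 1) :
    Multipliable (fun m : ℕ => (1 - q ^ (m + 1))⁻¹) := by
  have hne := one_sub_pow_ne_zero hq1
  have harg : ∀ m : ℕ, (1 - q ^ (m + 1)).arg ≠ Real.pi := by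
    intro m h
    rw [Complex.arg_eq_pi_iff] at h
    have hre : (1 - q ^ (m + 1)).re = 1 - (q ^ (m + 1)).re := by simp
    have : (q ^ (m + 1)).re < 1 := by
      calc (q ^ (m + 1)).re ≤ ‖q ^ (m + 1)‖ := Complex.re_le_norm _
        _ < 1 := by
            rw [norm_pow]
            exact pow_lt_one₀ (norm_nonneg q) hq1 (Nat.succ_ne_zero m)
    rw [hre] at h
    linarith [h.1]
  refine Complex.multipliable_of_summable_log
    (?_ : Summable (fun m : ℕ => Complex.log ((1 - q ^ (m + 1))⁻¹)))
  have : (fun m : ℕ => Complex.log ((1 - q ^ (m + 1))⁻¹))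
      = fun m : ℕ => -Complex.log (1 - q ^ (m + 1)) := by
    funext m
    exact Complex.log_inv _ (harg m)
  rw [this]
  exact ((summable_log_one_sub hq1 1).congr (fun m => by rw [one_mul])).neg

lemma mult_pow {f : ℕ → ℂ} (h : Multipliable f) (k : ℕ) :
    Multipliable (fun m => f m ^ k) := by
  induction k with
  | zero => simpa using multipliable_one
  | succ k ih => exact (ih.mul h).congr (fun m => by rw [pow_succ])

lemma mult_finset_prod {ι : Type*} (s : Finset ι) (f : ι → ℕ → ℂ)
    (hf : ∀ i ∈ s, Multipliable (f i)) :
    Multipliable (fun m => ∏ i ∈ s, f i m) := by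
  classical
  induction s using Finset.induction_on with
  | empty => simpa using multipliable_one
  | @insert a s ha ih =>
      have := ((hf a (Finset.mem_insert_self a s)).mul
        (ih (fun i hi => hf i (Finset.mem_insert_of_mem hi))))
      exact this.congr (fun m => by rw [Finset.prod_insert ha])

lemma tprod_finset_prod {ι : Type*} (s : Finset ι) (f : ι → ℕ → ℂ)
    (hf : ∀ i ∈ s, Multipliable (f i)) :
    ∏ i ∈ s, (∏' m, f i m) = ∏' m, ∏ i ∈ s, f i m := by
  classical
  induction s using Finset.induction_on with
  | empty => simp [tprod_one]
  | @insert a s ha ih =>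
      rw [Finset.prod_insert ha,
        ih (fun i hi => hf i (Finset.mem_insert_of_mem hi)),
        ← Multipliable.tprod_mul (hf a (Finset.mem_insert_self a s))
          (mult_finset_prod s f (fun i hi => hf i (Finset.mem_insert_of_mem hi)))]
      exact tprod_congr (fun m => (Finset.prod_insert (f := fun i => f i m) ha).symm)

end analytic

lemma theta_prod (N : ℕ) (hN : 1 ≤ N) {q : ℂ} (hq1 : ‖q‖ < 1) :
    ∃ C : ℂ, ∀ u : ℂ,
      ∏ r ∈ Finset.range N, Theta q (u + 2 * Real.pi * Complex.I * r / N)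
        = C * Theta (q ^ N) ((N : ℂ) * u) := by
  have hNpos : 0 < N := hN
  have hN0 : (N : ℂ) ≠ 0 := Nat.cast_ne_zero.mpr hNpos.ne'
  set ζ : ℂ := Complex.exp (2 * Real.pi * Complex.I / N) with hζdef
  have hζ : IsPrimitiveRoot ζ N := Complex.isPrimitiveRoot_exp N hNpos.ne'
  have hζinv : IsPrimitiveRoot ζ⁻¹ N := hζ.inv
  have hqN : ‖q ^ N‖ < 1 := by
    rw [norm_pow]; exact pow_lt_one₀ (norm_nonneg q) hq1 hNpos.ne'
  refine ⟨((-1) ^ (N + 1) * Complex.exp (-(Real.pi * Complex.I * ((N : ℂ) - 1)) / 2)) *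
    ∏' m : ℕ, ((1 - (q ^ N) ^ (m + 1)) * ((1 - q ^ (m + 1))⁻¹) ^ N) ^ 2, fun u => ?_⟩
  have hexp : ∀ r : ℕ, Complex.exp (u + 2 * Real.pi * Complex.I * r / N)
      = Complex.exp u * ζ ^ r := by
    intro r
    rw [hζdef, ← Complex.exp_nat_mul, ← Complex.exp_add]
    congr 1; ring
  have hexpneg : ∀ r : ℕ, Complex.exp (-(u + 2 * Real.pi * Complex.I * r / N))
      = Complex.exp (-u) * (ζ⁻¹) ^ r := by
    intro r
    rw [hζdef, ← Complex.exp_neg, ← Complex.exp_nat_mul, ← Complex.exp_add]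
    congr 1; ring
  -- Gauss sum
  have hsumN : ∑ r ∈ Finset.range N, (r : ℂ) = (N : ℂ) * ((N : ℂ) - 1) / 2 := by
    have h2 : (∑ r ∈ Finset.range N, r) * 2 = N * (N - 1) := Finset.sum_range_id_mul_two N
    have h3 := congrArg (fun n : ℕ => (n : ℂ)) h2
    push_cast [Nat.cast_sub hN] at h3
    field_simp
    linear_combination h3
  -- prefactor identity
  have hpref : ∏ r ∈ Finset.range N,
      (Complex.exp ((u + 2 * Real.pi * Complex.I * r / N) / 2) -
        Complex.exp (-(u + 2 * Real.pi * Complex.I * r / N) / 2))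
      = (-1) ^ (N + 1) * Complex.exp (-(Real.pi * Complex.I * ((N : ℂ) - 1)) / 2) *
        (Complex.exp (((N : ℂ) * u) / 2) - Complex.exp (-((N : ℂ) * u) / 2)) := by
    have step1 : ∀ r : ℕ, r ∈ Finset.range N →
        Complex.exp ((u + 2 * Real.pi * Complex.I * r / N) / 2) -
          Complex.exp (-(u + 2 * Real.pi * Complex.I * r / N) / 2)
        = Complex.exp (-(u + 2 * Real.pi * Complex.I * r / N) / 2) *
          (Complex.exp (u + 2 * Real.pi * Complex.I * r / N) - 1) := by
      intro r _
      rw [show (u + 2 * Real.pi * Complex.I * r / N) / 2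
          = -(u + 2 * Real.pi * Complex.I * r / N) / 2 + (u + 2 * Real.pi * Complex.I * r / N)
          by ring, Complex.exp_add]
      ring
    rw [Finset.prod_congr rfl step1, Finset.prod_mul_distrib, ← Complex.exp_sum]
    have hsum : ∑ r ∈ Finset.range N, (-(u + 2 * Real.pi * Complex.I * r / N) / 2)
        = -((N : ℂ) * u) / 2 + -(Real.pi * Complex.I * ((N : ℂ) - 1)) / 2 := by
      have hterm : ∀ r : ℕ, r ∈ Finset.range N →
          -(u + 2 * Real.pi * Complex.I * r / N) / 2
          = -u / 2 + (-(Real.pi * Complex.I / N)) * r := fun r _ => by ring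
      rw [Finset.sum_congr rfl hterm, Finset.sum_add_distrib, Finset.sum_const,
        Finset.card_range, ← Finset.mul_sum, hsumN]
      field_simp
      ring
    have hprod2 : ∏ r ∈ Finset.range N,
        (Complex.exp (u + 2 * Real.pi * Complex.I * r / N) - 1)
        = (-1) ^ N * (1 - Complex.exp ((N : ℂ) * u)) := by
      have hterm : ∀ r : ℕ, r ∈ Finset.range N →
          Complex.exp (u + 2 * Real.pi * Complex.I * r / N) - 1
          = -(1 - Complex.exp u * ζ ^ r) := fun r _ => by rw [hexp r]; ring
      rw [Finset.prod_congr rfl hterm, prod_neg', Finset.card_range,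
        prod_range_one_sub hNpos hζ, ← Complex.exp_nat_mul]
    rw [hsum, hprod2, Complex.exp_add]
    have hhalf : Complex.exp (((N : ℂ) * u) / 2)
        = Complex.exp (-((N : ℂ) * u) / 2) * Complex.exp ((N : ℂ) * u) := by
      rw [← Complex.exp_add]; congr 1; ring
    rw [hhalf]
    ring
  -- multipliability
  have hmulA : ∀ a : ℂ, Multipliable (fun m : ℕ => 1 - a * q ^ (m + 1)) := mult_one_sub hq1
  have hmulD : Multipliable (fun m : ℕ => ((1 - q ^ (m + 1))⁻¹) ^ 2) :=
    mult_pow (mult_inv_one_sub hq1) 2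
  have hmulF : ∀ r : ℕ, Multipliable (fun m : ℕ =>
      (1 - Complex.exp (u + 2 * Real.pi * Complex.I * r / N) * q ^ (m + 1)) *
        (1 - Complex.exp (-(u + 2 * Real.pi * Complex.I * r / N)) * q ^ (m + 1)) /
      (1 - q ^ (m + 1)) ^ 2) := by
    intro r
    have := ((hmulA (Complex.exp (u + 2 * Real.pi * Complex.I * r / N))).mul
      (hmulA (Complex.exp (-(u + 2 * Real.pi * Complex.I * r / N))))).mul hmulD
    exact this.congr (fun m => by rw [inv_pow, ← div_eq_mul_inv])
  have hmulG : Multipliable (fun m : ℕ =>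
      ((1 - (q ^ N) ^ (m + 1)) * ((1 - q ^ (m + 1))⁻¹) ^ N) ^ 2) := by
    refine mult_pow ?_ 2
    exact (((mult_one_sub hqN 1).congr (fun m => by rw [one_mul])).mul
      (mult_pow (mult_inv_one_sub hq1) N))
  have hmulFN : Multipliable (fun m : ℕ =>
      (1 - Complex.exp ((N : ℂ) * u) * (q ^ N) ^ (m + 1)) *
        (1 - Complex.exp (-((N : ℂ) * u)) * (q ^ N) ^ (m + 1)) /
      (1 - (q ^ N) ^ (m + 1)) ^ 2) := by
    have := ((mult_one_sub hqN (Complex.exp ((N : ℂ) * u))).mul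
      (mult_one_sub hqN (Complex.exp (-((N : ℂ) * u))))).mul
      (mult_pow (mult_inv_one_sub hqN) 2)
    exact this.congr (fun m => by rw [inv_pow, ← div_eq_mul_inv])
  -- swap finite product and tprod
  have key : ∏ r ∈ Finset.range N, ∏' m : ℕ,
      ((1 - Complex.exp (u + 2 * Real.pi * Complex.I * r / N) * q ^ (m + 1)) *
        (1 - Complex.exp (-(u + 2 * Real.pi * Complex.I * r / N)) * q ^ (m + 1)) /
      (1 - q ^ (m + 1)) ^ 2)
      = ∏' m : ℕ, ∏ r ∈ Finset.range N,
      ((1 - Complex.exp (u + 2 * Real.pi * Complex.I * r / N) * q ^ (m + 1)) *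
        (1 - Complex.exp (-(u + 2 * Real.pi * Complex.I * r / N)) * q ^ (m + 1)) /
      (1 - q ^ (m + 1)) ^ 2) :=
    tprod_finset_prod _ _ (fun r _ => hmulF r)
  -- pointwise identity
  have hpoint : ∀ m : ℕ, ∏ r ∈ Finset.range N,
      ((1 - Complex.exp (u + 2 * Real.pi * Complex.I * r / N) * q ^ (m + 1)) *
        (1 - Complex.exp (-(u + 2 * Real.pi * Complex.I * r / N)) * q ^ (m + 1)) /
      (1 - q ^ (m + 1)) ^ 2)
      = ((1 - (q ^ N) ^ (m + 1)) * ((1 - q ^ (m + 1))⁻¹) ^ N) ^ 2 *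
        ((1 - Complex.exp ((N : ℂ) * u) * (q ^ N) ^ (m + 1)) *
          (1 - Complex.exp (-((N : ℂ) * u)) * (q ^ N) ^ (m + 1)) /
        (1 - (q ^ N) ^ (m + 1)) ^ 2) := by
    intro m
    have hd := one_sub_pow_ne_zero hq1 m
    have he := one_sub_pow_ne_zero hqN m
    have hqpow : (q ^ (m + 1)) ^ N = (q ^ N) ^ (m + 1) := by
      rw [← pow_mul, ← pow_mul, mul_comm]
    have hA : ∏ r ∈ Finset.range N,
        (1 - Complex.exp (u + 2 * Real.pi * Complex.I * r / N) * q ^ (m + 1))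
        = 1 - Complex.exp ((N : ℂ) * u) * (q ^ N) ^ (m + 1) := by
      have hterm : ∀ r : ℕ, r ∈ Finset.range N →
          1 - Complex.exp (u + 2 * Real.pi * Complex.I * r / N) * q ^ (m + 1)
          = 1 - (Complex.exp u * q ^ (m + 1)) * ζ ^ r := fun r _ => by rw [hexp r]; ring
      rw [Finset.prod_congr rfl hterm, prod_range_one_sub hNpos hζ, mul_pow,
        ← Complex.exp_nat_mul, hqpow]
    have hB : ∏ r ∈ Finset.range N,
        (1 - Complex.exp (-(u + 2 * Real.pi * Complex.I * r / N)) * q ^ (m + 1))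
        = 1 - Complex.exp (-((N : ℂ) * u)) * (q ^ N) ^ (m + 1) := by
      have hterm : ∀ r : ℕ, r ∈ Finset.range N →
          1 - Complex.exp (-(u + 2 * Real.pi * Complex.I * r / N)) * q ^ (m + 1)
          = 1 - (Complex.exp (-u) * q ^ (m + 1)) * (ζ⁻¹) ^ r := fun r _ => by
            rw [hexpneg r]; ring
      rw [Finset.prod_congr rfl hterm, prod_range_one_sub hNpos hζinv, mul_pow,
        ← Complex.exp_nat_mul, hqpow, show (N : ℂ) * -u = -((N : ℂ) * u) by ring]
    calc ∏ r ∈ Finset.range N,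
        ((1 - Complex.exp (u + 2 * Real.pi * Complex.I * r / N) * q ^ (m + 1)) *
          (1 - Complex.exp (-(u + 2 * Real.pi * Complex.I * r / N)) * q ^ (m + 1)) /
        (1 - q ^ (m + 1)) ^ 2)
        = (∏ r ∈ Finset.range N,
            (1 - Complex.exp (u + 2 * Real.pi * Complex.I * r / N) * q ^ (m + 1))) *
          (∏ r ∈ Finset.range N,
            (1 - Complex.exp (-(u + 2 * Real.pi * Complex.I * r / N)) * q ^ (m + 1))) *
          (∏ _r ∈ Finset.range N, ((1 - q ^ (m + 1))⁻¹) ^ 2) := by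
          rw [← Finset.prod_mul_distrib, ← Finset.prod_mul_distrib]
          exact Finset.prod_congr rfl fun r _ => by rw [inv_pow, ← div_eq_mul_inv]
      _ = _ := by
          rw [Finset.prod_const, Finset.card_range, hA, hB,
            show (((1 - q ^ (m + 1))⁻¹) ^ 2) ^ N = (((1 - q ^ (m + 1))⁻¹) ^ N) ^ 2 by
              rw [← pow_mul, ← pow_mul, mul_comm],
            mul_pow, div_eq_mul_inv]
          have hc : (1 - (q ^ N) ^ (m + 1)) ^ 2 * ((1 - (q ^ N) ^ (m + 1)) ^ 2)⁻¹ = 1 :=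
            mul_inv_cancel₀ (pow_ne_zero 2 he)
          linear_combination (-((1 - Complex.exp ((N : ℂ) * u) * (q ^ N) ^ (m + 1)) *
            (1 - Complex.exp (-((N : ℂ) * u)) * (q ^ N) ^ (m + 1)) *
            (((1 - q ^ (m + 1))⁻¹) ^ N) ^ 2)) * hc
  -- assemble
  unfold Theta
  rw [Finset.prod_mul_distrib, hpref, key, tprod_congr hpoint, Multipliable.tprod_mul hmulG hmulFN]
  ring

/-- **Factorization of the level `N` theta function.**
`Θ_N(Nu)/Θ_N(Nv) = ∏_{r mod N} Θ(u + 2πir/N)/Θ(v + 2πir/N)`, where `Θ_N` is the theta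
function with `q` replaced by `q^N`. -/
theorem theta_level_factorization (N : ℕ) (hN : 1 ≤ N) (q : ℂ)
    (hq0 : 0 < ‖q‖) (hq1 : ‖q‖ < 1) (u v : ℂ)
    (hv : Theta (q ^ N) ((N : ℂ) * v) ≠ 0)
    (hvr : ∀ r < N, Theta q (v + 2 * Real.pi * Complex.I * r / N) ≠ 0) :
    Theta (q ^ N) ((N : ℂ) * u) / Theta (q ^ N) ((N : ℂ) * v) =
      ∏ r ∈ Finset.range N,
        Theta q (u + 2 * Real.pi * Complex.I * r / N) /
          Theta q (v + 2 * Real.pi * Complex.I * r / N) := by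
  obtain ⟨C, hC⟩ := theta_prod N hN hq1
  have hprodv : ∏ r ∈ Finset.range N, Theta q (v + 2 * Real.pi * Complex.I * r / N) ≠ 0 :=
    Finset.prod_ne_zero_iff.mpr (fun r hr => hvr r (Finset.mem_range.mp hr))
  have hC0 : C ≠ 0 := by
    intro h
    apply hprodv
    rw [hC v, h, zero_mul]
  rw [Finset.prod_div_distrib, hC u, hC v, mul_div_mul_left _ _ hC0]
end
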